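/- arXiv:1906.08075 — 7 statements merged into one kernel-verified Lean document; each statement's English description precedes it below -/
import Mathlib

section
/- Let a > 1, m > 0, m' < m·a and C > 0 be real numbers. Then there exists a constant c > 0, depending only on a, m, m' and C, with the following property: if Y : ℝ → [0,∞) is differentiable on [0,∞) and satisfies, for all t ≥ 0, Y'(t) + (a/(1+t))·Y(t) ≤ C·( Y(t)/(1+t)² + Y(t)² + (1+t)^{m'−1}·Y(t)^{m+1} ), and if Y(0) ≤ c, then for all t ≥ 0 one has Y(t) ≤ 2·e^{C·t/(1+t)}·Y(0)/(1+t)^a. -/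
open Real Set

private lemma one_add_hasDerivAt (t : ℝ) : HasDerivAt (fun s : ℝ => 1 + s) 1 t := by
  simpa using (hasDerivAt_id t).const_add (1:ℝ)

private lemma frac_le_C {C t : ℝ} (hC : 0 ≤ C) (ht : 0 ≤ t) : C * t / (1 + t) ≤ C := by
  rw [div_le_iff₀ (by linarith)]
  nlinarith

private lemma core (a m m' C d : ℝ) (ha : 1 < a) (hm : 0 < m) (hm' : m' < m * a)
    (hC : 0 < C) (hd : 0 < d)
    (hΦ : C * (2 * Real.exp C * d / (a - 1) + (2 * Real.exp C * d) ^ m / (m * a - m')) ≤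
      Real.log (3 / 2))
    (Y : ℝ → ℝ) (hdiff : Differentiable ℝ Y) (hpos : ∀ t : ℝ, 0 ≤ t → 0 ≤ Y t)
    (hODE : ∀ t : ℝ, 0 ≤ t →
      deriv Y t + (a / (1 + t)) * Y t ≤
        C * (Y t / (1 + t) ^ (2 : ℝ) + Y t ^ (2 : ℝ) + (1 + t) ^ (m' - 1) * Y t ^ (m + 1)))
    (hY0 : Y 0 ≤ d) (y : ℝ)
    (hb : ∀ s ∈ Icc (0:ℝ) y, Y s ≤ 2 * Real.exp C * d * (1 + s) ^ (-a)) :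
    ∀ t ∈ Icc (0:ℝ) y, Y t ≤ 3 / 2 * Real.exp (C * t / (1 + t)) * d / (1 + t) ^ a := by
  set K₁ : ℝ := 2 * Real.exp C * d with hK₁def
  set K₂ : ℝ := K₁ ^ m with hK₂def
  set p₁ : ℝ := 1 - a with hp₁def
  set p₂ : ℝ := m' - m * a with hp₂def
  have hp₁ : p₁ < 0 := by simp [hp₁def]; linarith
  have hp₂ : p₂ < 0 := by simp [hp₂def]; linarith
  have hK₁pos : 0 < K₁ := by positivity
  set F : ℝ → ℝ := fun t =>
    a * Real.log (1 + t) - C * t / (1 + t)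
      - C * (K₁ * (((1+t) ^ p₁ - 1) / p₁) + K₂ * (((1+t) ^ p₂ - 1) / p₂)) with hFdef
  set F' : ℝ → ℝ := fun t =>
    a / (1 + t) - C / (1 + t) ^ 2
      - C * (K₁ * (1+t) ^ (p₁ - 1) + K₂ * (1+t) ^ (p₂ - 1)) with hF'def
  have hF : ∀ t : ℝ, -1 < t → HasDerivAt F (F' t) t := by
    intro t ht
    have hg : (0:ℝ) < 1 + t := by linarith
    have h1 : HasDerivAt (fun s : ℝ => 1 + s) 1 t := one_add_hasDerivAt t
    have hlog : HasDerivAt (fun s : ℝ => a * Real.log (1 + s)) (a * (1 / (1 + t))) t :=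
      (h1.log hg.ne').const_mul a
    have hfrac : HasDerivAt (fun s : ℝ => C * s / (1 + s)) (C / (1 + t) ^ 2) t := by
      have hn : HasDerivAt (fun s : ℝ => C * s) C t := by
        simpa using (hasDerivAt_id t).const_mul C
      have h2 := hn.div h1 hg.ne'
      refine h2.congr_deriv ?_
      field_simp
      ring
    have hψ : ∀ p : ℝ, p ≠ 0 →
        HasDerivAt (fun s : ℝ => ((1+s) ^ p - 1) / p) ((1+t) ^ (p - 1)) t := by
      intro p hp
      have h2 := ((h1.rpow_const (p := p) (Or.inl hg.ne')).sub_const 1).div_const p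
      refine h2.congr_deriv ?_
      field_simp
    have hcomb := (hlog.sub hfrac).sub
      ((((hψ p₁ hp₁.ne).const_mul K₁).add ((hψ p₂ hp₂.ne).const_mul K₂)).const_mul C)
    refine hcomb.congr_deriv ?_
    simp [hF'def]
    ring
  set u : ℝ → ℝ := fun t => Y t * Real.exp (F t) with hudef
  have hu : ∀ t : ℝ, -1 < t →
      HasDerivAt u (deriv Y t * Real.exp (F t) + Y t * (Real.exp (F t) * F' t)) t := by
    intro t ht
    exact ((hdiff t).hasDerivAt).mul ((hF t ht).exp)
  -- derivative nonpositive on relevant interior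
  have hderivle : ∀ t : ℝ, 0 < t → t < y →
      deriv Y t * Real.exp (F t) + Y t * (Real.exp (F t) * F' t) ≤ 0 := by
    intro t ht0 hty
    have hg : (0:ℝ) < 1 + t := by linarith
    have hYnn : 0 ≤ Y t := hpos t ht0.le
    have hbt : Y t ≤ K₁ * (1 + t) ^ (-a) := hb t ⟨ht0.le, hty.le⟩
    have key : deriv Y t + Y t * F' t ≤ 0 := by
      have hODEt := hODE t ht0.le
      have e2 : (1 + t) ^ (2:ℝ) = (1 + t) ^ (2:ℕ) := Real.rpow_two _
      have h1 : Y t ^ (2:ℝ) ≤ Y t * (K₁ * (1+t) ^ (p₁ - 1)) := by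
        have : Y t ^ (2:ℝ) = Y t * Y t := by
          rw [show (2:ℝ) = 1 + 1 by norm_num, Real.rpow_add' hYnn (by norm_num),
            Real.rpow_one]
        rw [this, show p₁ - 1 = -a by rw [hp₁def]; ring]
        exact mul_le_mul_of_nonneg_left hbt hYnn
      have h2 : (1+t) ^ (m' - 1) * Y t ^ (m + 1) ≤ Y t * (K₂ * (1+t) ^ (p₂ - 1)) := by
        have hsplit : Y t ^ (m + 1) = Y t ^ m * Y t := by
          rw [Real.rpow_add' hYnn (by positivity), Real.rpow_one]
        have hYm : Y t ^ m ≤ K₂ * (1+t) ^ (-a * m) := by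
          calc Y t ^ m ≤ (K₁ * (1+t) ^ (-a)) ^ m :=
                Real.rpow_le_rpow hYnn hbt hm.le
            _ = K₁ ^ m * ((1+t) ^ (-a)) ^ m := Real.mul_rpow hK₁pos.le (by positivity)
            _ = K₂ * (1+t) ^ (-a * m) := by rw [← Real.rpow_mul hg.le, hK₂def]
        calc (1+t) ^ (m' - 1) * Y t ^ (m + 1)
            = (1+t) ^ (m' - 1) * (Y t ^ m * Y t) := by rw [hsplit]
          _ ≤ (1+t) ^ (m' - 1) * ((K₂ * (1+t) ^ (-a * m)) * Y t) := by
              apply mul_le_mul_of_nonneg_left _ (by positivity)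
              exact mul_le_mul_of_nonneg_right hYm hYnn
          _ = Y t * (K₂ * ((1+t) ^ (m' - 1) * (1+t) ^ (-a * m))) := by ring
          _ = Y t * (K₂ * (1+t) ^ (p₂ - 1)) := by
              rw [← Real.rpow_add hg, show m' - 1 + -a * m = p₂ - 1 by rw [hp₂def]; ring]
      have hF't : F' t = a / (1 + t) - C / (1 + t) ^ 2
          - C * (K₁ * (1+t) ^ (p₁ - 1) + K₂ * (1+t) ^ (p₂ - 1)) := rfl
      rw [hF't]
      rw [e2] at hODEt
      have hm1 := mul_le_mul_of_nonneg_left h1 hC.le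
      have hm2 := mul_le_mul_of_nonneg_left h2 hC.le
      ring_nf at hODEt hm1 hm2 ⊢
      linarith [hODEt, hm1, hm2]
    have hexp : (0:ℝ) < Real.exp (F t) := Real.exp_pos _
    calc deriv Y t * Real.exp (F t) + Y t * (Real.exp (F t) * F' t)
        = (deriv Y t + Y t * F' t) * Real.exp (F t) := by ring
      _ ≤ 0 := mul_nonpos_of_nonpos_of_nonneg key hexp.le
  -- u is antitone on Icc 0 y
  have hanti : AntitoneOn u (Icc 0 y) := by
    apply antitoneOn_of_deriv_nonpos (convex_Icc 0 y)
    · intro t ht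
      exact ((hu t (by linarith [ht.1])).differentiableAt).continuousAt.continuousWithinAt
    · intro t ht
      rw [interior_Icc] at ht
      exact ((hu t (by linarith [ht.1])).differentiableAt).differentiableWithinAt
    · intro t ht
      rw [interior_Icc] at ht
      rw [(hu t (by linarith [ht.1])).deriv]
      exact hderivle t ht.1 ht.2
  intro t ht
  have hg : (0:ℝ) < 1 + t := by linarith [ht.1]
  have hF0 : F 0 = 0 := by
    norm_num [hFdef, Real.one_rpow]
  have hu0 : u 0 = Y 0 := by simp [hudef, hF0]
  have huty : u t ≤ d := by
    have h0m : (0:ℝ) ∈ Icc (0:ℝ) y := ⟨le_refl 0, ht.2.trans' ht.1⟩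
    have := hanti h0m ht ht.1
    rw [hu0] at this
    linarith
  -- unfold u
  have hYt : Y t ≤ d * Real.exp (-F t) := by
    have heq : u t * Real.exp (-F t) = Y t := by
      simp only [hudef]
      rw [mul_assoc, ← Real.exp_add]
      simp
    rw [← heq]
    exact mul_le_mul_of_nonneg_right huty (Real.exp_pos _).le
  -- bound exp(-F t)
  have hψ₁ : ((1+t) ^ p₁ - 1) / p₁ ≤ 1 / (a - 1) := by
    rw [div_le_iff_of_neg hp₁]
    have h1 : (0:ℝ) ≤ (1+t) ^ p₁ := by positivity
    have h2 : 1 / (a - 1) * p₁ = -1 := by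
      rw [hp₁def, div_mul_eq_mul_div, one_mul, div_eq_iff (by linarith : a - 1 ≠ 0)] ; ring
    rw [h2]; linarith
  have hψ₂ : ((1+t) ^ p₂ - 1) / p₂ ≤ 1 / (m * a - m') := by
    rw [div_le_iff_of_neg hp₂]
    have h1 : (0:ℝ) ≤ (1+t) ^ p₂ := by positivity
    have h2 : 1 / (m * a - m') * p₂ = -1 := by
      rw [hp₂def, div_mul_eq_mul_div, one_mul, div_eq_iff (by linarith : m * a - m' ≠ 0)] ; ring
    rw [h2]; linarith
  have hΦt : C * (K₁ * (((1+t) ^ p₁ - 1) / p₁) + K₂ * (((1+t) ^ p₂ - 1) / p₂))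
      ≤ Real.log (3/2) := by
    refine le_trans ?_ hΦ
    have e1 : 2 * Real.exp C * d / (a - 1) = K₁ * (1 / (a-1)) := by rw [hK₁def]; ring
    have e2 : (2 * Real.exp C * d) ^ m / (m * a - m') = K₂ * (1 / (m*a - m')) := by
      rw [hK₂def, hK₁def]; ring
    rw [e1, e2]
    have hK₂nn : (0:ℝ) ≤ K₂ := by rw [hK₂def]; positivity
    apply mul_le_mul_of_nonneg_left _ hC.le
    have t1 := mul_le_mul_of_nonneg_left hψ₁ hK₁pos.le
    have t2 := mul_le_mul_of_nonneg_left hψ₂ hK₂nn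
    linarith
  have hexpF : Real.exp (-F t) ≤ (1+t) ^ (-a) * Real.exp (C * t / (1+t)) * (3/2) := by
    have : -F t = Real.log (1+t) * (-a) + C * t / (1+t)
        + C * (K₁ * (((1+t) ^ p₁ - 1) / p₁) + K₂ * (((1+t) ^ p₂ - 1) / p₂)) := by
      simp only [hFdef]; ring
    rw [this, Real.exp_add, Real.exp_add, ← Real.rpow_def_of_pos hg]
    have h32 : Real.exp (C * (K₁ * (((1+t) ^ p₁ - 1) / p₁) + K₂ * (((1+t) ^ p₂ - 1) / p₂)))
        ≤ 3/2 := by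
      calc _ ≤ Real.exp (Real.log (3/2)) := Real.exp_le_exp.mpr hΦt
        _ = 3/2 := Real.exp_log (by norm_num)
    have hpos1 : (0:ℝ) < (1+t) ^ (-a) * Real.exp (C * t / (1+t)) := by positivity
    exact mul_le_mul_of_nonneg_left h32 hpos1.le
  calc Y t ≤ d * Real.exp (-F t) := hYt
    _ ≤ d * ((1+t) ^ (-a) * Real.exp (C * t / (1+t)) * (3/2)) :=
        mul_le_mul_of_nonneg_left hexpF hd.le
    _ = 3 / 2 * Real.exp (C * t / (1 + t)) * d / (1 + t) ^ a := by
        rw [Real.rpow_neg hg.le, div_eq_mul_inv]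
        ring

private lemma cond_to_weak {a C d s : ℝ} (hC : 0 < C) (hd : 0 < d) (hs : 0 ≤ s)
    {Ys : ℝ} (h : Ys ≤ 3 / 2 * Real.exp (C * s / (1 + s)) * d / (1 + s) ^ a) :
    Ys ≤ 2 * Real.exp C * d * (1 + s) ^ (-a) := by
  have hg : (0:ℝ) < 1 + s := by linarith
  have hE : Real.exp (C * s / (1 + s)) ≤ Real.exp C :=
    Real.exp_le_exp.mpr (frac_le_C hC.le hs)
  rw [Real.rpow_neg hg.le]
  rw [div_eq_mul_inv] at h
  have hinv : (0:ℝ) ≤ ((1 + s) ^ a)⁻¹ := by positivity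
  calc Ys ≤ 3 / 2 * Real.exp (C * s / (1 + s)) * d * ((1 + s) ^ a)⁻¹ := h
    _ ≤ 2 * Real.exp C * d * ((1 + s) ^ a)⁻¹ := by
        have h1 : 3 / 2 * Real.exp (C * s / (1 + s)) * d ≤ 2 * Real.exp C * d := by
          nlinarith [Real.exp_pos (C * s / (1 + s))]
        exact mul_le_mul_of_nonneg_right h1 hinv

private lemma key (a m m' C d : ℝ) (ha : 1 < a) (hm : 0 < m) (hm' : m' < m * a)
    (hC : 0 < C) (hd : 0 < d)
    (hΦ : C * (2 * Real.exp C * d / (a - 1) + (2 * Real.exp C * d) ^ m / (m * a - m')) ≤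
      Real.log (3 / 2))
    (Y : ℝ → ℝ) (hdiff : Differentiable ℝ Y) (hpos : ∀ t : ℝ, 0 ≤ t → 0 ≤ Y t)
    (hODE : ∀ t : ℝ, 0 ≤ t →
      deriv Y t + (a / (1 + t)) * Y t ≤
        C * (Y t / (1 + t) ^ (2 : ℝ) + Y t ^ (2 : ℝ) + (1 + t) ^ (m' - 1) * Y t ^ (m + 1)))
    (hY0 : Y 0 ≤ d) :
    ∀ t : ℝ, 0 ≤ t → Y t ≤ 3 / 2 * Real.exp (C * t / (1 + t)) * d / (1 + t) ^ a := by
  intro T hT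
  by_contra hcon
  set P : ℝ → Prop := fun t => Y t ≤ 3 / 2 * Real.exp (C * t / (1 + t)) * d / (1 + t) ^ a
    with hPdef
  set B : Set ℝ := {t | t ∈ Icc 0 T ∧ ¬ P t} with hBdef
  have hTB : T ∈ B := ⟨⟨hT, le_refl T⟩, hcon⟩
  have hBne : B.Nonempty := ⟨T, hTB⟩
  have hBdd : BddBelow B := ⟨0, fun x hx => hx.1.1⟩
  set τ := sInf B with hτdef
  have hτ0 : 0 ≤ τ := le_csInf hBne (fun x hx => hx.1.1)
  have hτT : τ ≤ T := csInf_le hBdd hTB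
  have hbefore : ∀ s : ℝ, 0 ≤ s → s < τ → P s := by
    intro s hs hsτ
    by_contra hns
    have : τ ≤ s := csInf_le hBdd ⟨⟨hs, le_trans hsτ.le hτT⟩, hns⟩
    linarith
  -- continuity of the comparison function
  have hfc : ∀ x : ℝ, 0 ≤ x →
      ContinuousAt (fun s : ℝ => 2 * Real.exp C * d * (1 + s) ^ (-a) - Y s) x := by
    intro x hx
    have h1 : ContinuousAt (fun s : ℝ => 1 + s) x := by fun_prop
    have h2 : ContinuousAt (fun s : ℝ => (1 + s) ^ (-a)) x :=
      (Real.continuousAt_rpow_const (1 + x) (-a)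
        (Or.inl (by positivity))).comp h1
    exact (h2.const_mul _).sub (hdiff.continuous.continuousAt)
  -- weak bound on [0, τ]
  have hw : ∀ s ∈ Icc (0:ℝ) τ, Y s ≤ 2 * Real.exp C * d * (1 + s) ^ (-a) := by
    intro s hs
    rcases lt_or_eq_of_le hs.2 with h | h
    · exact cond_to_weak hC hd hs.1 (hbefore s hs.1 h)
    · 
      rcases eq_or_lt_of_le hs.1 with h0 | h0
      · -- s = τ = 0
        rw [← h0]
        have h1 : ((1:ℝ) + 0) ^ (-a) = 1 := by norm_num
        rw [h1, mul_one]
        have he : (1:ℝ) ≤ Real.exp C := Real.one_le_exp hC.le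
        nlinarith
      · -- s = τ > 0 : limit from the left
        have hcl : s ∈ closure (Ico (0:ℝ) s) := by
          rw [closure_Ico (ne_of_lt h0)]
          exact ⟨h0.le, le_refl s⟩
        haveI hne : (nhdsWithin s (Ico (0:ℝ) s)).NeBot :=
          mem_closure_iff_nhdsWithin_neBot.mp hcl
        have htends : Filter.Tendsto (fun x : ℝ => 2 * Real.exp C * d * (1 + x) ^ (-a) - Y x)
            (nhdsWithin s (Ico (0:ℝ) s)) (nhds (2 * Real.exp C * d * (1 + s) ^ (-a) - Y s)) :=
          ((hfc s hs.1).continuousWithinAt)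
        have hev : ∀ᶠ x in nhdsWithin s (Ico (0:ℝ) s),
            0 ≤ 2 * Real.exp C * d * (1 + x) ^ (-a) - Y x := by
          filter_upwards [eventually_mem_nhdsWithin] with x hx
          have := cond_to_weak hC hd hx.1 (hbefore x hx.1 (h ▸ hx.2))
          linarith
        have := ge_of_tendsto htends hev
        linarith
  -- apply core on [0, τ]
  have hcondτ := core a m m' C d ha hm hm' hC hd hΦ Y hdiff hpos hODE hY0 τ hw
  rcases eq_or_lt_of_le hτT with hEq | hlt
  · exact hcon (hEq ▸ hcondτ τ ⟨hτ0, le_refl τ⟩)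
  · -- strict margin at τ
    have hg : (0:ℝ) < 1 + τ := by linarith
    have hmargin : 0 < 2 * Real.exp C * d * (1 + τ) ^ (-a) - Y τ := by
      have h1 := hcondτ τ ⟨hτ0, le_refl τ⟩
      rw [div_eq_mul_inv] at h1
      have hE : Real.exp (C * τ / (1 + τ)) ≤ Real.exp C :=
        Real.exp_le_exp.mpr (frac_le_C hC.le hτ0)
      have hinv : (0:ℝ) < ((1 + τ) ^ a)⁻¹ := by positivity
      have h2 : 3 / 2 * Real.exp (C * τ / (1 + τ)) * d < 2 * Real.exp C * d := by
        nlinarith [Real.exp_pos (C * τ / (1 + τ))]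
      have h3 := mul_lt_mul_of_pos_right h2 hinv
      rw [Real.rpow_neg hg.le]
      linarith
    have hev : ∀ᶠ x in nhds τ, 0 < 2 * Real.exp C * d * (1 + x) ^ (-a) - Y x :=
      (hfc τ hτ0) (Ioi_mem_nhds hmargin)
    obtain ⟨δ, hδpos, hδ⟩ := Metric.eventually_nhds_iff.mp hev
    set y := min (τ + δ / 2) T with hydef
    have hyτ : τ < y := lt_min (by linarith) hlt
    have hwy : ∀ s ∈ Icc (0:ℝ) y, Y s ≤ 2 * Real.exp C * d * (1 + s) ^ (-a) := by
      intro s hs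
      rcases le_or_gt s τ with h | h
      · exact hw s ⟨hs.1, h⟩
      · have hd1 : dist s τ < δ := by
          rw [Real.dist_eq, abs_of_pos (by linarith)]
          have : s ≤ τ + δ / 2 := le_trans hs.2 (min_le_left _ _)
          linarith
        have := hδ hd1
        linarith
    have hcondy := core a m m' C d ha hm hm' hC hd hΦ Y hdiff hpos hODE hY0 y hwy
    have hlb : ∀ x ∈ B, y ≤ x := by
      intro x hx
      by_contra hxy
      push_neg at hxy
      exact hx.2 (hcondy x ⟨hx.1.1, hxy.le⟩)
    have : y ≤ τ := le_csInf hBne hlb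
    linarith

theorem ode_decay_lemma (a m m' C : ℝ) (ha : 1 < a) (hm : 0 < m) (hm' : m' < m * a)
    (hC : 0 < C) :
    ∃ c > 0, ∀ Y : ℝ → ℝ,
      Differentiable ℝ Y →
      (∀ t : ℝ, 0 ≤ t → 0 ≤ Y t) →
      (∀ t : ℝ, 0 ≤ t →
        deriv Y t + (a / (1 + t)) * Y t ≤
          C * (Y t / (1 + t) ^ (2 : ℝ) + Y t ^ (2 : ℝ) + (1 + t) ^ (m' - 1) * Y t ^ (m + 1))) →
      Y 0 ≤ c →
      ∀ t : ℝ, 0 ≤ t → Y t ≤ 2 * Real.exp (C * t / (1 + t)) * Y 0 / (1 + t) ^ a := by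
  have hL : (0:ℝ) < Real.log (3 / 2) := Real.log_pos (by norm_num)
  have ha1 : (0:ℝ) < a - 1 := by linarith
  have hma : (0:ℝ) < m * a - m' := by linarith
  set c₁ : ℝ := Real.log (3 / 2) * (a - 1) / (4 * C * Real.exp C) with hc₁def
  set c₂ : ℝ := (Real.log (3 / 2) * (m * a - m') / (2 * C)) ^ (1 / m) / (2 * Real.exp C)
    with hc₂def
  have hXpos : (0:ℝ) < Real.log (3 / 2) * (m * a - m') / (2 * C) := by positivity
  have hc₁ : 0 < c₁ := by rw [hc₁def]; positivity
  have hc₂ : 0 < c₂ := by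
    rw [hc₂def]
    have := Real.rpow_pos_of_pos hXpos (1 / m)
    positivity
  set M : ℝ := min c₁ c₂ with hMdef
  have hM : 0 < M := lt_min hc₁ hc₂
  have hΦM : ∀ d : ℝ, 0 < d → d ≤ M →
      C * (2 * Real.exp C * d / (a - 1) + (2 * Real.exp C * d) ^ m / (m * a - m')) ≤
        Real.log (3 / 2) := by
    intro d hd hdM
    have hd₁ : d ≤ c₁ := le_trans hdM (min_le_left _ _)
    have hd₂ : d ≤ c₂ := le_trans hdM (min_le_right _ _)
    have h1 : C * (2 * Real.exp C * d / (a - 1)) ≤ Real.log (3 / 2) / 2 := by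
      have he : 2 * Real.exp C * d ≤ 2 * Real.exp C * c₁ :=
        mul_le_mul_of_nonneg_left hd₁ (by positivity)
      have heq : C * (2 * Real.exp C * c₁ / (a - 1)) = Real.log (3 / 2) / 2 := by
        rw [hc₁def]
        field_simp
        ring
      calc C * (2 * Real.exp C * d / (a - 1))
          ≤ C * (2 * Real.exp C * c₁ / (a - 1)) := by gcongr
        _ = Real.log (3 / 2) / 2 := heq
    have h2 : C * ((2 * Real.exp C * d) ^ m / (m * a - m')) ≤ Real.log (3 / 2) / 2 := by
      have hbase : 2 * Real.exp C * d ≤ 2 * Real.exp C * c₂ :=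
        mul_le_mul_of_nonneg_left hd₂ (by positivity)
      have hle : (2 * Real.exp C * d) ^ m ≤ (2 * Real.exp C * c₂) ^ m :=
        Real.rpow_le_rpow (by positivity) hbase hm.le
      have heq : (2 * Real.exp C * c₂) ^ m = Real.log (3 / 2) * (m * a - m') / (2 * C) := by
        have e1 : 2 * Real.exp C * c₂
            = (Real.log (3 / 2) * (m * a - m') / (2 * C)) ^ (1 / m) := by
          rw [hc₂def]
          field_simp
        rw [e1, ← Real.rpow_mul hXpos.le, one_div, inv_mul_cancel₀ hm.ne', Real.rpow_one]
      have heq2 : C * (Real.log (3 / 2) * (m * a - m') / (2 * C) / (m * a - m'))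
          = Real.log (3 / 2) / 2 := by
        field_simp
      calc C * ((2 * Real.exp C * d) ^ m / (m * a - m'))
          ≤ C * ((2 * Real.exp C * c₂) ^ m / (m * a - m')) := by gcongr
        _ = Real.log (3 / 2) / 2 := by rw [heq]; exact heq2
    rw [mul_add]
    linarith
  refine ⟨4 / 5 * M, by positivity, ?_⟩
  intro Y hdiff hpos hODE hY0 t ht
  have hg : (0:ℝ) < 1 + t := by linarith
  rcases (hpos 0 le_rfl).eq_or_lt with h0 | h0
  · -- Y 0 = 0
    have hzero : ∀ ε : ℝ, 0 < ε → ε ≤ M →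
        Y t ≤ 3 / 2 * Real.exp (C * t / (1 + t)) * ε / (1 + t) ^ a := by
      intro ε hε hεM
      exact key a m m' C ε ha hm hm' hC hε (hΦM ε hε hεM) Y hdiff hpos hODE
        (by rw [← h0]; exact hε.le) t ht
    have hKb : ∀ ε : ℝ, 0 < ε → ε ≤ M → Y t ≤ 3 / 2 * Real.exp C * ε := by
      intro ε hε hεM
      refine le_trans (hzero ε hε hεM) ?_
      have hE : Real.exp (C * t / (1 + t)) ≤ Real.exp C :=
        Real.exp_le_exp.mpr (frac_le_C hC.le ht)
      have hpow : (1:ℝ) ≤ (1 + t) ^ a := by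
        calc (1:ℝ) = (1 + t) ^ (0:ℝ) := by rw [Real.rpow_zero]
          _ ≤ (1 + t) ^ a := Real.rpow_le_rpow_of_exponent_le (by linarith) (by linarith)
      calc 3 / 2 * Real.exp (C * t / (1 + t)) * ε / (1 + t) ^ a
          ≤ 3 / 2 * Real.exp (C * t / (1 + t)) * ε := by
            apply div_le_self (by positivity) hpow
        _ ≤ 3 / 2 * Real.exp C * ε := by nlinarith [Real.exp_pos (C * t / (1 + t))]
    by_contra hY
    push_neg at hY
    have hYt0 : 0 < Y t := by
      rw [← h0] at hY
      simpa using hY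
    set ε₀ : ℝ := min M (Y t / (3 * Real.exp C)) with hε₀def
    have hε₀ : 0 < ε₀ := lt_min hM (by positivity)
    have h1 := hKb ε₀ hε₀ (min_le_left _ _)
    have h2 : 3 / 2 * Real.exp C * ε₀ ≤ 3 / 2 * Real.exp C * (Y t / (3 * Real.exp C)) :=
      mul_le_mul_of_nonneg_left (min_le_right _ _) (by positivity)
    have h3 : 3 / 2 * Real.exp C * (Y t / (3 * Real.exp C)) = Y t / 2 := by
      field_simp
    rw [h3] at h2
    linarith
  · -- 0 < Y 0
    have hd : 0 < 5 / 4 * Y 0 := by linarith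
    have hdM : 5 / 4 * Y 0 ≤ M := by linarith
    have hk := key a m m' C (5 / 4 * Y 0) ha hm hm' hC hd (hΦM _ hd hdM) Y hdiff hpos hODE
      (by linarith) t ht
    have hnum : 3 / 2 * Real.exp (C * t / (1 + t)) * (5 / 4 * Y 0)
        ≤ 2 * Real.exp (C * t / (1 + t)) * Y 0 := by
      nlinarith [Real.exp_pos (C * t / (1 + t))]
    calc Y t ≤ 3 / 2 * Real.exp (C * t / (1 + t)) * (5 / 4 * Y 0) / (1 + t) ^ a := hk
      _ ≤ 2 * Real.exp (C * t / (1 + t)) * Y 0 / (1 + t) ^ a :=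
          by gcongr
end

section
/- Let a, m, m', C be real numbers with C > 0 and m > 0, and let Y : ℝ → [0,∞) be differentiable on [0,∞) and satisfy, for all t ≥ 0, Y'(t) + (a/(1+t))·Y(t) ≤ C·( Y(t)/(1+t)² + Y(t)² + (1+t)^{m'−1}·Y(t)^{m+1} ). Define Z(t) := (1+t)^a · e^{−C·t/(1+t)} · Y(t). Then Z is differentiable on [0,∞) and for all t ≥ 0, Z'(t) ≤ C·e^{C}·(1+t)^{−a}·Z(t)² + C·e^{C·m}·(1+t)^{m'−m·a−1}·Z(t)^{m+1}. -/
open Real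

set_option maxHeartbeats 1000000 in
theorem Z_differential_inequality (a m m' C : ℝ) (hC : 0 < C) (hm : 0 < m)
    (Y : ℝ → ℝ) (hYdiff : Differentiable ℝ Y)
    (hYnn : ∀ t : ℝ, 0 ≤ t → 0 ≤ Y t)
    (hineq : ∀ t : ℝ, 0 ≤ t →
      deriv Y t + (a / (1 + t)) * Y t ≤
        C * (Y t / (1 + t) ^ (2 : ℝ) + Y t ^ (2 : ℝ) + (1 + t) ^ (m' - 1) * Y t ^ (m + 1)))
    (Z : ℝ → ℝ)
    (hZ : ∀ t : ℝ, Z t = (1 + t) ^ a * Real.exp (-(C * t / (1 + t))) * Y t) :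
    DifferentiableOn ℝ Z (Set.Ici 0) ∧
      ∀ t : ℝ, 0 ≤ t →
        deriv Z t ≤
          C * Real.exp C * (1 + t) ^ (-a) * Z t ^ (2 : ℝ) +
            C * Real.exp (C * m) * (1 + t) ^ (m' - m * a - 1) * Z t ^ (m + 1) := by
  have hZf : Z = fun t => (1 + t) ^ a * Real.exp (-(C * t / (1 + t))) * Y t := funext hZ
  subst hZf
  have hgderiv : ∀ t : ℝ, 0 ≤ t →
      HasDerivAt (fun s : ℝ => (1 + s) ^ a * Real.exp (-(C * s / (1 + s))))
        (((1 + t) ^ a * Real.exp (-(C * t / (1 + t)))) * (a / (1 + t) - C / (1 + t) ^ 2)) t := by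
    intro t ht
    have hu : (0:ℝ) < 1 + t := by linarith
    have h1 : HasDerivAt (fun s : ℝ => 1 + s) 1 t := by
      simpa using (hasDerivAt_id t).const_add 1
    have h2 : HasDerivAt (fun s : ℝ => (1 + s) ^ a) (a * (1 + t) ^ (a - 1)) t := by
      have := h1.rpow_const (p := a) (Or.inl hu.ne')
      simpa using this
    have h3 : HasDerivAt (fun s : ℝ => C * s / (1 + s)) (C / (1 + t) ^ 2) t := by
      have hc : HasDerivAt (fun s : ℝ => C * s) C t := by
        simpa using (hasDerivAt_id t).const_mul C
      have := hc.div h1 hu.ne'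
      refine this.congr_deriv ?_
      ring
    have h4 : HasDerivAt (fun s : ℝ => Real.exp (-(C * s / (1 + s))))
        (Real.exp (-(C * t / (1 + t))) * (-(C / (1 + t) ^ 2))) t := h3.neg.exp
    have := h2.mul h4
    refine this.congr_deriv ?_
    have hpow : (1 + t) ^ (a - 1) = (1 + t) ^ a / (1 + t) := by
      rw [Real.rpow_sub hu, Real.rpow_one]
    rw [hpow]
    field_simp
    ring
  have hZder : ∀ t : ℝ, 0 ≤ t →
      HasDerivAt (fun s : ℝ => (1 + s) ^ a * Real.exp (-(C * s / (1 + s))) * Y s)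
        ((((1 + t) ^ a * Real.exp (-(C * t / (1 + t)))) * (a / (1 + t) - C / (1 + t) ^ 2)) * Y t
          + ((1 + t) ^ a * Real.exp (-(C * t / (1 + t)))) * deriv Y t) t := by
    intro t ht
    exact (hgderiv t ht).mul (hYdiff t).hasDerivAt
  constructor
  · intro t ht
    exact ((hZder t ht).differentiableAt).differentiableWithinAt
  · intro t ht
    have hu : (0:ℝ) < 1 + t := by linarith
    have hY0 : 0 ≤ Y t := hYnn t ht
    have hP : (0:ℝ) < (1 + t) ^ a := Real.rpow_pos_of_pos hu a
    have hE : (0:ℝ) < Real.exp (-(C * t / (1 + t))) := Real.exp_pos _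
    rw [(hZder t ht).deriv]
    set P := (1 + t) ^ a with hPdef
    set E := Real.exp (-(C * t / (1 + t))) with hEdef
    set x := C * t / (1 + t) with hxdef
    have hx : x ≤ C := by
      rw [hxdef, div_le_iff₀ hu]; nlinarith
    have hx0 : 0 ≤ x := by
      rw [hxdef]; positivity
    -- step 1: bound the derivative using hineq
    have hPE : (0:ℝ) < P * E := mul_pos hP hE
    have h := hineq t ht
    have h2 : (1 + t) ^ (2:ℝ) = (1 + t) ^ (2:ℕ) := by
      rw [show ((2:ℝ)) = ((2:ℕ):ℝ) by norm_num, Real.rpow_natCast]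
    rw [h2] at h
    have hstep := mul_le_mul_of_nonneg_left h hPE.le
    have key : (P * E) * (a / (1 + t) - C / (1 + t) ^ 2) * Y t + (P * E) * deriv Y t ≤
        P * E * (C * Y t ^ (2:ℝ)) + P * E * (C * ((1 + t) ^ (m' - 1) * Y t ^ (m + 1))) := by
      have hcancel : (P * E) * (a / (1 + t) - C / (1 + t) ^ 2) * Y t + (P * E) * deriv Y t
          = P * E * (deriv Y t + a / (1 + t) * Y t) - P * E * (C * (Y t / (1 + t) ^ 2)) := by
        ring
      have hexpand : P * E * (C * (Y t / (1 + t) ^ 2 + Y t ^ (2:ℝ) + (1 + t) ^ (m' - 1) * Y t ^ (m + 1)))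
          = P * E * (C * (Y t / (1 + t) ^ 2)) + P * E * (C * Y t ^ (2:ℝ))
            + P * E * (C * ((1 + t) ^ (m' - 1) * Y t ^ (m + 1))) := by ring
      linarith [hstep]
    -- step 2: bound each term
    have hT1 : P * E * (C * Y t ^ (2:ℝ)) ≤
        C * Real.exp C * (1 + t) ^ (-a) * (P * E * Y t) ^ (2:ℝ) := by
      have hmul : (P * E * Y t) ^ (2:ℝ) = P ^ (2:ℝ) * E ^ (2:ℝ) * Y t ^ (2:ℝ) := by
        rw [Real.mul_rpow (by positivity) hY0, Real.mul_rpow hP.le hE.le]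
      have hP2 : P ^ (2:ℝ) = (1 + t) ^ (a * 2) := by
        rw [hPdef, ← Real.rpow_mul hu.le]
      have hE2 : E ^ (2:ℝ) = Real.exp (-x * 2) := by
        rw [hEdef, ← Real.exp_mul]
      have hcomb : (1 + t) ^ (-a) * (1 + t) ^ (a * 2) = P := by
        rw [← Real.rpow_add hu, hPdef]; congr 1; ring
      have hEle : E ≤ Real.exp C * Real.exp (-x * 2) := by
        rw [← Real.exp_add, hEdef]
        exact Real.exp_le_exp.mpr (by linarith)
      calc P * E * (C * Y t ^ (2:ℝ))
          ≤ P * (Real.exp C * Real.exp (-x * 2)) * (C * Y t ^ (2:ℝ)) := by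
            gcongr
        _ = C * Real.exp C * (1 + t) ^ (-a) * (P * E * Y t) ^ (2:ℝ) := by
            rw [hmul, hP2, hE2]
            linear_combination (-(C * Real.exp C * Real.exp (-x * 2) * Y t ^ (2:ℝ))) * hcomb
    have hT2 : P * E * (C * ((1 + t) ^ (m' - 1) * Y t ^ (m + 1))) ≤
        C * Real.exp (C * m) * (1 + t) ^ (m' - m * a - 1) * (P * E * Y t) ^ (m + 1) := by
      have hmul : (P * E * Y t) ^ (m + 1) = P ^ (m + 1) * E ^ (m + 1) * Y t ^ (m + 1) := by
        rw [Real.mul_rpow (by positivity) hY0, Real.mul_rpow hP.le hE.le]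
      have hP2 : P ^ (m + 1) = (1 + t) ^ (a * (m + 1)) := by
        rw [hPdef, ← Real.rpow_mul hu.le]
      have hE2 : E ^ (m + 1) = Real.exp (-x * (m + 1)) := by
        rw [hEdef, ← Real.exp_mul]
      have hcomb : (1 + t) ^ (m' - m * a - 1) * (1 + t) ^ (a * (m + 1)) =
          (1 + t) ^ (m' - 1) * P := by
        rw [← Real.rpow_add hu, hPdef, ← Real.rpow_add hu]; congr 1; ring
      have hEle : E ≤ Real.exp (C * m) * Real.exp (-x * (m + 1)) := by
        rw [← Real.exp_add, hEdef]
        refine Real.exp_le_exp.mpr ?_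
        nlinarith
      calc P * E * (C * ((1 + t) ^ (m' - 1) * Y t ^ (m + 1)))
          ≤ P * (Real.exp (C * m) * Real.exp (-x * (m + 1))) * (C * ((1 + t) ^ (m' - 1) * Y t ^ (m + 1))) := by
            gcongr
        _ = C * Real.exp (C * m) * (1 + t) ^ (m' - m * a - 1) * (P * E * Y t) ^ (m + 1) := by
            rw [hmul, hP2, hE2]
            linear_combination (-(C * Real.exp (C * m) * Real.exp (-x * (m + 1)) * Y t ^ (m + 1))) * hcomb
    calc (P * E * (a / (1 + t) - C / (1 + t) ^ 2)) * Y t + (P * E) * deriv Y t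
        = (P * E) * (a / (1 + t) - C / (1 + t) ^ 2) * Y t + (P * E) * deriv Y t := by ring
      _ ≤ P * E * (C * Y t ^ (2:ℝ)) + P * E * (C * ((1 + t) ^ (m' - 1) * Y t ^ (m + 1))) := key
      _ ≤ C * Real.exp C * (1 + t) ^ (-a) * (P * E * Y t) ^ (2:ℝ) +
            C * Real.exp (C * m) * (1 + t) ^ (m' - m * a - 1) * (P * E * Y t) ^ (m + 1) :=
          add_le_add hT1 hT2
end

section
/- Let a > 1, b > 0, m > 0 and α, β ≥ 0 be real numbers. Let Z : ℝ → [0,∞) be differentiable on [0,∞) and satisfy, for all t ≥ 0, Z'(t) ≤ α·(1+t)^{−a}·Z(t)² + β·(1+t)^{−b−1}·Z(t)^{m+1}. Set Z₀ := Z(0) and assume Z₀ > 0 and (4α/(a−1))·Z₀ + (2^{m+1}·β/b)·Z₀^m < 1. Then Z(t) < 2·Z₀ for all t ≥ 0. -/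
set_option maxHeartbeats 1600000
open Real

theorem bootstrap_lemma (a b m α β : ℝ) (ha : 1 < a) (hb : 0 < b) (hm : 0 < m)
    (hα : 0 ≤ α) (hβ : 0 ≤ β)
    (Z : ℝ → ℝ) (hZdiff : Differentiable ℝ Z)
    (hZnn : ∀ t : ℝ, 0 ≤ t → 0 ≤ Z t)
    (hineq : ∀ t : ℝ, 0 ≤ t →
      deriv Z t ≤ α * (1 + t) ^ (-a) * Z t ^ (2 : ℝ) + β * (1 + t) ^ (-b - 1) * Z t ^ (m + 1))
    (hZ0pos : 0 < Z 0)
    (hsmall : 4 * α / (a - 1) * Z 0 + (2 : ℝ) ^ (m + 1) * β / b * Z 0 ^ m < 1) :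
    ∀ t : ℝ, 0 ≤ t → Z t < 2 * Z 0 := by
  by_contra hcon
  push_neg at hcon
  obtain ⟨t₀, ht₀0, ht₀⟩ := hcon
  set K : Set ℝ := {t | 0 ≤ t ∧ 2 * Z 0 ≤ Z t} with hK
  have hKne : K.Nonempty := ⟨t₀, ht₀0, ht₀⟩
  have hKbdd : BddBelow K := ⟨0, fun x hx => hx.1⟩
  have hKclosed : IsClosed K := by
    have : K = Set.Ici 0 ∩ Z ⁻¹' Set.Ici (2 * Z 0) := by
      ext x; simp [hK, Set.mem_inter_iff]
    rw [this]
    exact isClosed_Ici.inter (isClosed_Ici.preimage hZdiff.continuous)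
  set t₁ := sInf K with ht₁
  have ht₁K : t₁ ∈ K := hKclosed.csInf_mem hKne hKbdd
  have ht₁0 : 0 ≤ t₁ := ht₁K.1
  have ht₁Z : 2 * Z 0 ≤ Z t₁ := ht₁K.2
  have ht₁pos : 0 < t₁ := by
    rcases lt_or_eq_of_le ht₁0 with h | h
    · exact h
    · exfalso; rw [← h] at ht₁Z; linarith
  -- on [0, t₁), Z s < 2 Z 0
  have hlt : ∀ s : ℝ, 0 ≤ s → s < t₁ → Z s < 2 * Z 0 := by
    intro s hs hst
    by_contra hc
    push_neg at hc
    exact absurd (csInf_le hKbdd ⟨hs, hc⟩) (not_le.mpr hst)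
  have ha1 : (0:ℝ) < a - 1 := by linarith
  set C₁ : ℝ := 4 * α / (a - 1) * Z 0 * Z 0 with hC₁
  set C₂ : ℝ := (2:ℝ) ^ (m + 1) * β / b * Z 0 ^ m * Z 0 with hC₂
  have hC₁nn : 0 ≤ C₁ := by positivity
  have h2m : (0:ℝ) < (2:ℝ) ^ (m+1) := rpow_pos_of_pos (by norm_num) _
  have hZ0m : (0:ℝ) < Z 0 ^ m := rpow_pos_of_pos hZ0pos _
  have hC₂nn : 0 ≤ C₂ := by
    rw [hC₂]; positivity
  set G : ℝ → ℝ := fun s => Z 0 + C₁ * (1 - (1+s) ^ (1-a)) + C₂ * (1 - (1+s) ^ (-b)) with hG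
  -- derivative of G
  have hGderiv : ∀ s : ℝ, 0 ≤ s → HasDerivAt G
      (C₁ * (a-1) * (1+s) ^ (-a) + C₂ * b * (1+s) ^ (-b-1)) s := by
    intro s hs
    have h1s : (0:ℝ) < 1 + s := by linarith
    have hid : HasDerivAt (fun x : ℝ => 1 + x) 1 s := by
      simpa using (hasDerivAt_id s).const_add 1
    have hp1 : HasDerivAt (fun x : ℝ => (1+x) ^ (1-a)) (1 * (1-a) * (1+s) ^ (1-a-1)) s :=
      hid.rpow_const (Or.inl h1s.ne')
    have hp2 : HasDerivAt (fun x : ℝ => (1+x) ^ (-b)) (1 * (-b) * (1+s) ^ (-b-1)) s :=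
      hid.rpow_const (Or.inl h1s.ne')
    have : HasDerivAt G
        (C₁ * (0 - 1 * (1-a) * (1+s) ^ (1-a-1)) + C₂ * (0 - 1 * (-b) * (1+s) ^ (-b-1))) s := by
      exact (((((hasDerivAt_const s (1:ℝ)).sub hp1).const_mul C₁).const_add
        (Z 0)).add (((hasDerivAt_const s (1:ℝ)).sub hp2).const_mul C₂))
    convert this using 1
    have : (1 - a - 1) = -a := by ring
    rw [this]
    ring
  have hGdiff : ∀ s : ℝ, 0 ≤ s → DifferentiableAt ℝ G s :=
    fun s hs => (hGderiv s hs).differentiableAt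
  -- key: Z - G antitone on [0, t₁]
  have hanti : AntitoneOn (fun s => Z s - G s) (Set.Icc 0 t₁) := by
    apply antitoneOn_of_deriv_nonpos (convex_Icc 0 t₁)
    · exact hZdiff.continuous.continuousOn.sub
        (fun x hx => (hGdiff x hx.1).continuousAt.continuousWithinAt)
    · rw [interior_Icc]
      intro x hx
      exact ((hZdiff x).sub (hGdiff x hx.1.le)).differentiableWithinAt
    · rw [interior_Icc]
      intro x hx
      have hx0 : 0 ≤ x := hx.1.le
      have hZx : 0 ≤ Z x := hZnn x hx0
      have hZlt : Z x < 2 * Z 0 := hlt x hx0 hx.2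
      have h1x : (0:ℝ) < 1 + x := by linarith
      rw [deriv_fun_sub (hZdiff x) (hGdiff x hx0), (hGderiv x hx0).deriv]
      have hb1 : deriv Z x ≤ α * (1+x) ^ (-a) * Z x ^ (2:ℝ) + β * (1+x) ^ (-b-1) * Z x ^ (m+1) :=
        hineq x hx0
      have hr1 : Z x ^ (2:ℝ) ≤ (2 * Z 0) ^ (2:ℝ) :=
        rpow_le_rpow hZx hZlt.le (by norm_num)
      have hr2 : Z x ^ (m+1) ≤ (2 * Z 0) ^ (m+1) :=
        rpow_le_rpow hZx hZlt.le (by positivity)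
      have he1 : (2 * Z 0) ^ (2:ℝ) = 4 * (Z 0 * Z 0) := by
        rw [rpow_two]; ring
      have he2 : (2 * Z 0) ^ (m+1) = 2 ^ (m+1) * (Z 0 ^ m * Z 0) := by
        rw [mul_rpow (by norm_num) hZ0pos.le, rpow_add_one hZ0pos.ne']
      have hpa : (0:ℝ) < (1+x) ^ (-a) := rpow_pos_of_pos h1x _
      have hpb : (0:ℝ) < (1+x) ^ (-b-1) := rpow_pos_of_pos h1x _
      have hC1e : C₁ * (a-1) = 4 * α * (Z 0 * Z 0) := by
        rw [hC₁]; field_simp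
      have hC2e : C₂ * b = 2 ^ (m+1) * β * (Z 0 ^ m * Z 0) := by
        rw [hC₂]; field_simp
      have key : α * (1+x) ^ (-a) * Z x ^ (2:ℝ) + β * (1+x) ^ (-b-1) * Z x ^ (m+1)
          ≤ C₁ * (a-1) * (1+x) ^ (-a) + C₂ * b * (1+x) ^ (-b-1) := by
        rw [hC1e, hC2e]
        have t1 : α * (1+x) ^ (-a) * Z x ^ (2:ℝ) ≤ α * (1+x) ^ (-a) * (4 * (Z 0 * Z 0)) := by
          rw [← he1]
          exact mul_le_mul_of_nonneg_left hr1 (by positivity)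
        have t2 : β * (1+x) ^ (-b-1) * Z x ^ (m+1)
            ≤ β * (1+x) ^ (-b-1) * (2 ^ (m+1) * (Z 0 ^ m * Z 0)) := by
          rw [← he2]
          exact mul_le_mul_of_nonneg_left hr2 (by positivity)
        nlinarith [t1, t2]
      linarith [hb1, key]
  have h0mem : (0:ℝ) ∈ Set.Icc (0:ℝ) t₁ := ⟨le_refl 0, ht₁0⟩
  have ht₁mem : t₁ ∈ Set.Icc (0:ℝ) t₁ := ⟨ht₁0, le_refl t₁⟩
  have hdiff0 : Z t₁ - G t₁ ≤ Z 0 - G 0 := hanti h0mem ht₁mem ht₁0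
  have hG0 : G 0 = Z 0 := by
    simp [hG]
  have hZt₁ : Z t₁ ≤ G t₁ := by
    rw [hG0] at hdiff0; linarith
  -- G t₁ < 2 * Z 0
  have hp1pos : (0:ℝ) < (1+t₁) ^ (1-a) := rpow_pos_of_pos (by linarith) _
  have hp2pos : (0:ℝ) < (1+t₁) ^ (-b) := rpow_pos_of_pos (by linarith) _
  have hGle : G t₁ ≤ Z 0 + C₁ + C₂ := by
    have h1 : C₁ * (1 - (1+t₁) ^ (1-a)) ≤ C₁ := by
      nlinarith [mul_nonneg hC₁nn hp1pos.le]
    have h2 : C₂ * (1 - (1+t₁) ^ (-b)) ≤ C₂ := by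
      nlinarith [mul_nonneg hC₂nn hp2pos.le]
    simp only [hG]; linarith
  have hsum : C₁ + C₂ < Z 0 := by
    have := mul_lt_mul_of_pos_right hsmall hZ0pos
    rw [one_mul] at this
    calc C₁ + C₂ = (4 * α / (a - 1) * Z 0 + 2 ^ (m + 1) * β / b * Z 0 ^ m) * Z 0 := by
          rw [hC₁, hC₂]; ring
      _ < Z 0 := this
  linarith [ht₁Z, hZt₁, hGle, hsum]
end

section
/- Let d ≥ 1 and let A be a real d×d matrix. Let ε > 0 and assume that every eigenvalue λ ∈ ℂ of A (i.e., every element of the spectrum of A viewed as a complex matrix) satisfies dist(λ, ℝ₋) ≥ ε. Then there exists a constant C > 0 such that for every real t ≥ 0 the matrix I + t·A is invertible and ‖(I + t·A)⁻¹‖ ≤ C/(1 + ε·t), where ‖·‖ is the operator norm induced by the Euclidean norm on ℝ^d. -/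
set_option synthInstance.maxHeartbeats 1000000
open Matrix

lemma aux_unit (d : ℕ) (A : Matrix (Fin d) (Fin d) ℝ) (ε : ℝ) (hε : 0 < ε)
    (hspec : ∀ lam ∈ spectrum ℂ (A.map Complex.ofReal),
      ε ≤ Metric.infDist lam {z : ℂ | z.im = 0 ∧ z.re ≤ 0})
    (a b : ℝ) (ha : 0 ≤ a) (hb : 0 ≤ b) (hab : 0 < a + b) :
    IsUnit ((a • 1 + b • A : Matrix (Fin d) (Fin d) ℝ)) := by
  rw [Matrix.isUnit_iff_isUnit_det, isUnit_iff_ne_zero]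
  intro hdet
  rcases eq_or_lt_of_le hb with hb0 | hb0
  · rw [← hb0] at hdet
    have : (a • (1 : Matrix (Fin d) (Fin d) ℝ) + (0:ℝ) • A).det = a ^ d := by
      simp [Matrix.det_smul]
    have ha' : 0 < a := by linarith
    exact absurd (this.symm.trans hdet) (by positivity)
  · set lam : ℂ := Complex.ofReal (-a/b) with hlam
    have hmem : lam ∈ spectrum ℂ (A.map Complex.ofReal) := by
      rw [spectrum.mem_iff]
      rw [Matrix.isUnit_iff_isUnit_det, isUnit_iff_ne_zero]
      intro hne
      apply hne
      have key : algebraMap ℂ (Matrix (Fin d) (Fin d) ℂ) lam - A.map Complex.ofReal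
          = (-(b:ℂ))⁻¹ • ((a • 1 + b • A : Matrix (Fin d) (Fin d) ℝ).map Complex.ofReal) := by
        ext i j
        simp only [Matrix.sub_apply, Matrix.smul_apply, Matrix.map_apply, Matrix.add_apply,
          Matrix.algebraMap_matrix_apply, Matrix.one_apply, hlam]
        have hbC : (b:ℂ) ≠ 0 := by exact_mod_cast hb0.ne'
        by_cases h : i = j <;> simp [h] <;> push_cast <;> field_simp <;>
          ring
      rw [key, Matrix.det_smul]
      have : ((a • 1 + b • A : Matrix (Fin d) (Fin d) ℝ).map Complex.ofReal).det
          = Complex.ofReal ((a • 1 + b • A : Matrix (Fin d) (Fin d) ℝ).det) :=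
        (RingHom.map_det (Complex.ofRealHom) _).symm
      rw [this, hdet]
      simp
    have h1 := hspec lam hmem
    have h2 : lam ∈ {z : ℂ | z.im = 0 ∧ z.re ≤ 0} := by
      constructor
      · simp [hlam]
      · simp only [hlam, Complex.ofReal_re]
        apply div_nonpos_of_nonpos_of_nonneg <;> linarith
    rw [Metric.infDist_zero_of_mem h2] at h1
    linarith

theorem resolvent_decay_bound (d : ℕ) (hd : 1 ≤ d) (A : Matrix (Fin d) (Fin d) ℝ)
    (ε : ℝ) (hε : 0 < ε)
    (hspec : ∀ lam ∈ spectrum ℂ (A.map Complex.ofReal),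
      ε ≤ Metric.infDist lam {z : ℂ | z.im = 0 ∧ z.re ≤ 0}) :
    ∃ C > 0, ∀ t : ℝ, 0 ≤ t → IsUnit (1 + t • A) ∧
      ‖Matrix.toEuclideanCLM (𝕜 := ℝ) (n := Fin d) ((1 + t • A)⁻¹)‖ ≤ C / (1 + ε * t) := by
  have hCLM : Continuous (Matrix.toEuclideanCLM (𝕜 := ℝ) (n := Fin d)) :=
    LinearMap.continuous_of_finiteDimensional
      ({ toFun := Matrix.toEuclideanCLM (𝕜 := ℝ) (n := Fin d),
         map_add' := map_add _, map_smul' := map_smul _ } :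
        Matrix (Fin d) (Fin d) ℝ →ₗ[ℝ] _)
  set f : ℝ → Matrix (Fin d) (Fin d) ℝ := fun s => s • 1 + (1 - s) • A with hf
  have hfc : Continuous f := by
    exact (continuous_id.smul continuous_const).add
      ((continuous_const.sub continuous_id).smul continuous_const)
  have hunit : ∀ s ∈ Set.Icc (0:ℝ) 1, IsUnit (f s) := by
    intro s hs
    exact aux_unit d A ε hε hspec s (1 - s) hs.1 (by linarith [hs.2]) (by linarith)
  have hdetne : ∀ s ∈ Set.Icc (0:ℝ) 1, (f s).det ≠ 0 := by
    intro s hs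
    have := hunit s hs
    rwa [Matrix.isUnit_iff_isUnit_det, isUnit_iff_ne_zero] at this
  have hg : ContinuousOn
      (fun s => ‖Matrix.toEuclideanCLM (𝕜 := ℝ) (n := Fin d) ((f s)⁻¹)‖) (Set.Icc (0:ℝ) 1) := by
    have h1 : ContinuousOn (fun s => (f s)⁻¹) (Set.Icc (0:ℝ) 1) := by
      have heq : ∀ s, (f s)⁻¹ = ((f s).det)⁻¹ • (f s).adjugate := fun s => by rw [Matrix.inv_def, Ring.inverse_eq_inv]
      simp_rw [heq]
      exact ((hfc.matrix_det.continuousOn).inv₀ hdetne).smul hfc.matrix_adjugate.continuousOn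
    exact (continuous_norm.comp hCLM).comp_continuousOn h1
  obtain ⟨s₀, hs₀, hmax⟩ := isCompact_Icc.exists_isMaxOn (Set.nonempty_Icc.mpr zero_le_one) hg
  set K := ‖Matrix.toEuclideanCLM (𝕜 := ℝ) (n := Fin d) ((f s₀)⁻¹)‖ with hKdef
  have hK0 : 0 ≤ K := norm_nonneg _
  refine ⟨(K + 1) * (1 + ε), by positivity, fun t ht => ?_⟩
  have h1t : (0:ℝ) < 1 + t := by linarith
  set s : ℝ := (1 + t)⁻¹ with hsdef
  have hs : s ∈ Set.Icc (0:ℝ) 1 := by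
    constructor
    · positivity
    · rw [hsdef]
      exact inv_le_one_of_one_le₀ (by linarith)
  have key : (1 : Matrix (Fin d) (Fin d) ℝ) + t • A = (1 + t) • f s := by
    rw [hf]
    simp only
    rw [smul_add, smul_smul, smul_smul, mul_inv_cancel₀ h1t.ne']
    have h2 : (1 + t) * (1 - s) = t := by
      rw [hsdef]
      field_simp
      ring
    rw [h2, one_smul]
  have hdetfs := isUnit_iff_ne_zero.mpr (hdetne s hs)
  have hu : IsUnit ((1 : Matrix (Fin d) (Fin d) ℝ) + t • A) := by
    rw [key, Matrix.isUnit_iff_isUnit_det, Matrix.det_smul, isUnit_iff_ne_zero]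
    exact mul_ne_zero (pow_ne_zero _ h1t.ne') (hdetne s hs)
  refine ⟨hu, ?_⟩
  have hinv : ((1 : Matrix (Fin d) (Fin d) ℝ) + t • A)⁻¹ = (1 + t)⁻¹ • (f s)⁻¹ := by
    rw [key]
    apply Matrix.inv_eq_right_inv
    rw [Matrix.smul_mul, Matrix.mul_smul, smul_smul, mul_inv_cancel₀ h1t.ne', one_smul,
      Matrix.mul_nonsing_inv _ ((Matrix.isUnit_iff_isUnit_det _).mp (hunit s hs))]
  rw [hinv, _root_.map_smul]
  rw [norm_smul ((1 + t)⁻¹) (Matrix.toEuclideanCLM (𝕜 := ℝ) (n := Fin d) ((f s)⁻¹))]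
  have hXK : ‖Matrix.toEuclideanCLM (𝕜 := ℝ) (n := Fin d) ((f s)⁻¹)‖ ≤ K := hmax hs
  have hεt : (0:ℝ) < 1 + ε * t := by positivity
  have hn : ‖(1 + t)⁻¹‖ = (1 + t)⁻¹ := by
    rw [Real.norm_eq_abs, abs_of_pos (by positivity)]
  rw [hn]
  calc (1 + t)⁻¹ * ‖Matrix.toEuclideanCLM (𝕜 := ℝ) (n := Fin d) ((f s)⁻¹)‖
      ≤ (1 + t)⁻¹ * K := by
        exact mul_le_mul_of_nonneg_left hXK (by positivity)
    _ ≤ (K + 1) * (1 + ε) / (1 + ε * t) := by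
        rw [inv_mul_eq_div, div_le_div_iff₀ h1t hεt]
        nlinarith [mul_nonneg hK0 ht, mul_nonneg (mul_nonneg hK0 hε.le) ht,
          mul_nonneg hε.le ht]
end

section
/- Let d ≥ 1 and let A be a real d×d matrix with operator norm ‖A‖ ≤ M. Let ε > 0 and assume that every eigenvalue λ ∈ ℂ of A (i.e., every element of the spectrum of A viewed as a complex matrix) satisfies dist(λ, ℝ₋) ≥ ε. Then there exists a constant C > 0 such that for all real t ≥ 0 the matrix I + t·A is invertible and ‖(1+t)·(I + t·A)⁻¹·(A − I)‖ ≤ C; that is, the matrix K(t) := (1+t)(I + tA)⁻¹(A − I) is bounded uniformly in t ≥ 0. -/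
open Matrix

theorem K_uniformly_bounded (d : ℕ) (hd : 1 ≤ d) (A : Matrix (Fin d) (Fin d) ℝ)
    (M ε : ℝ) (hε : 0 < ε)
    (hnorm : ‖Matrix.toEuclideanCLM (𝕜 := ℝ) (n := Fin d) A‖ ≤ M)
    (hspec : ∀ lam ∈ spectrum ℂ (A.map Complex.ofReal),
      ε ≤ Metric.infDist lam {z : ℂ | z.im = 0 ∧ z.re ≤ 0}) :
    ∃ C > 0, ∀ t : ℝ, 0 ≤ t → IsUnit (1 + t • A) ∧
      ‖Matrix.toEuclideanCLM (𝕜 := ℝ) (n := Fin d)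
          ((1 + t) • ((1 + t • A)⁻¹ * (A - 1)))‖ ≤ C := by
  classical
  set φ := Matrix.toEuclideanCLM (𝕜 := ℝ) (n := Fin d) with hφ
  set B : ℝ → Matrix (Fin d) (Fin d) ℝ := fun s => (1 - s) • 1 + s • A with hBdef
  -- every B s with s ∈ [0,1] is a unit
  have hunit : ∀ s ∈ Set.Icc (0:ℝ) 1, IsUnit (B s) := by
    intro s hs
    rcases eq_or_lt_of_le hs.1 with h0 | h0
    · simp [hBdef, ← h0]
    · by_contra hcon
      have hdet : (B s).det = 0 := by
        by_contra hd0
        exact hcon ((Matrix.isUnit_iff_isUnit_det _).mpr (isUnit_iff_ne_zero.mpr hd0))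
      set lam : ℂ := ((-(1 - s) / s : ℝ) : ℂ) with hlam
      have hmem : lam ∈ spectrum ℂ (A.map Complex.ofReal) := by
        rw [spectrum.mem_iff]
        intro hu
        have hdetC : ((B s).map Complex.ofReal).det = 0 := by
          have : (B s).map Complex.ofReal = (Complex.ofRealHom).mapMatrix (B s) := rfl
          rw [this, ← RingHom.map_det, hdet, map_zero]
        have hkey : algebraMap ℂ (Matrix (Fin d) (Fin d) ℂ) lam - A.map Complex.ofReal
            = (-(s:ℂ))⁻¹ • (B s).map Complex.ofReal := by
          have hBs : (B s).map Complex.ofReal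
              = ((1:ℂ) - s) • 1 + (s:ℂ) • A.map Complex.ofReal := by
            ext i j
            by_cases hij : i = j <;>
              simp [hBdef, Matrix.map_apply, Matrix.one_apply, hij, mul_comm]
          have hs0 : (s:ℂ) ≠ 0 := by exact_mod_cast ne_of_gt h0
          have c1 : (-(s:ℂ))⁻¹ * (1 - s) = lam := by
            rw [hlam]; push_cast; field_simp
          have c2 : (-(s:ℂ))⁻¹ * s = -1 := by field_simp
          rw [hBs, smul_add, smul_smul, smul_smul, c1, c2,
            Algebra.algebraMap_eq_smul_one, neg_smul, one_smul, sub_eq_add_neg]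
        rw [hkey] at hu
        have := (Matrix.isUnit_iff_isUnit_det _).mp hu
        rw [Matrix.det_smul, hdetC, mul_zero] at this
        exact (not_isUnit_zero : ¬ IsUnit (0:ℂ)) this
      have hin : lam ∈ {z : ℂ | z.im = 0 ∧ z.re ≤ 0} := by
        constructor
        · simp [hlam]
        · simp only [hlam, Complex.ofReal_re]
          apply div_nonpos_of_nonpos_of_nonneg
          · linarith [hs.2]
          · exact le_of_lt h0
      have := hspec lam hmem
      rw [Metric.infDist_zero_of_mem hin] at this
      linarith
  -- continuity and boundedness on [0,1]
  have hgcont : Continuous (fun s : ℝ => φ (B s)) := by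
    have : (fun s : ℝ => φ (B s)) = fun s => (1 - s) • 1 + s • φ A := by
      funext s; simp [hBdef, map_add, _root_.map_smul, _root_.map_one]
    rw [this]; fun_prop
  have hfcont : ContinuousOn (fun s : ℝ => ‖Ring.inverse (φ (B s)) * φ (A - 1)‖)
      (Set.Icc (0:ℝ) 1) := by
    apply ContinuousOn.norm
    apply ContinuousOn.mul _ continuousOn_const
    intro s hs
    have hu := (hunit s hs).map φ
    have h1 : ContinuousAt Ring.inverse (φ (B s)) := by
      have := NormedRing.inverse_continuousAt hu.unit
      rwa [IsUnit.unit_spec] at this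
    exact (ContinuousAt.comp (x := s) h1 hgcont.continuousAt).continuousWithinAt
  obtain ⟨s₀, hs₀, hmax'⟩ := isCompact_Icc.exists_isMaxOn (⟨0, by norm_num⟩ : (Set.Icc (0:ℝ) 1).Nonempty) hfcont
  have hmax : ∀ x ∈ Set.Icc (0:ℝ) 1, ‖Ring.inverse (φ (B x)) * φ (A - 1)‖ ≤ ‖Ring.inverse (φ (B s₀)) * φ (A - 1)‖ := fun x hx => hmax' hx
  refine ⟨‖Ring.inverse (φ (B s₀)) * φ (A - 1)‖ + 1, by positivity, fun t ht => ?_⟩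
  have ht1 : (0:ℝ) < 1 + t := by linarith
  set s : ℝ := t / (1 + t) with hsdef
  have hsIcc : s ∈ Set.Icc (0:ℝ) 1 := by
    constructor
    · positivity
    · rw [div_le_one ht1]; linarith
  have hBu := hunit s hsIcc
  have hBdetu : IsUnit (B s).det := (Matrix.isUnit_iff_isUnit_det _).mp hBu
  -- key decomposition
  have hkey : (1 : Matrix (Fin d) (Fin d) ℝ) + t • A = (1 + t) • B s := by
    have h1 : (1 + t) * (1 - s) = 1 := by rw [hsdef]; field_simp; ring
    have h2 : (1 + t) * s = t := by rw [hsdef]; field_simp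
    rw [hBdef]
    simp only [smul_add, smul_smul, h1, h2, one_smul]
  have hU : IsUnit ((1:Matrix (Fin d) (Fin d) ℝ) + t • A) := by
    rw [hkey, Matrix.isUnit_iff_isUnit_det, Matrix.det_smul, Fintype.card_fin]
    exact (IsUnit.pow d (isUnit_iff_ne_zero.mpr (ne_of_gt ht1))).mul hBdetu
  refine ⟨hU, ?_⟩
  -- compute the inverse
  have hinv : ((1:Matrix (Fin d) (Fin d) ℝ) + t • A)⁻¹ = (1 + t)⁻¹ • (B s)⁻¹ := by
    apply Matrix.inv_eq_right_inv
    rw [hkey, Matrix.smul_mul, Matrix.mul_smul, smul_smul,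
      mul_inv_cancel₀ (ne_of_gt ht1), one_smul, Matrix.mul_nonsing_inv _ hBdetu]
  have hcollapse : (1 + t) • (((1:Matrix (Fin d) (Fin d) ℝ) + t • A)⁻¹ * (A - 1))
      = (B s)⁻¹ * (A - 1) := by
    rw [hinv, Matrix.smul_mul, smul_smul, mul_inv_cancel₀ (ne_of_gt ht1), one_smul]
  rw [hcollapse]
  have hφinv : φ ((B s)⁻¹ * (A - 1)) = Ring.inverse (φ (B s)) * φ (A - 1) := by
    rw [_root_.map_mul]
    congr 1
    rw [Matrix.nonsing_inv_eq_ringInverse]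
    have hv := hBu.map φ
    obtain ⟨u, hu⟩ := hBu
    rw [← hu] at hv
    rw [← hu, Ring.inverse_unit]
    calc φ ↑u⁻¹ = φ ↑u⁻¹ * (φ ↑u * Ring.inverse (φ ↑u)) := by
          rw [Ring.mul_inverse_cancel _ hv, mul_one]
      _ = Ring.inverse (φ ↑u) := by
          rw [← mul_assoc, ← _root_.map_mul, Units.inv_mul, _root_.map_one, one_mul]
  rw [hφ] at hφinv ⊢
  rw [hφinv]
  have := hmax s hsIcc
  simp only [hφ] at this ⊢
  linarith
end

section
/- Let d ≥ 1, let v₀ : ℝ^d → ℝ^d be continuously differentiable, and let t ≥ 0. Assume that for every y ∈ ℝ^d, the linear map Id + t·Dv₀(y) is invertible and that sup_{y ∈ ℝ^d} ‖(Id + t·Dv₀(y))⁻¹‖ < ∞. Then the map X_t : ℝ^d → ℝ^d defined by X_t(y) := y + t·v₀(y) is a bijection of ℝ^d. -/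
open Set Metric Function Filter Topology
set_option maxHeartbeats 1600000
set_option linter.unusedSectionVars false
set_option linter.unusedVariables false

noncomputable section CharFlowAux
variable {E : Type*} [NormedAddCommGroup E] [NormedSpace ℝ E] [ProperSpace E] [Nontrivial E]

/-- Nonlinear right inverse from Ring.inverse -/
noncomputable def ringRightInv (A : E →L[ℝ] E) (h : IsUnit A) :
    ContinuousLinearMap.NonlinearRightInverse A where
  toFun := ⇑(Ring.inverse A)
  nnnorm := ‖Ring.inverse A‖₊
  bound' y := (Ring.inverse A).le_opNorm y
  right_inv' y := by
    have h1 : A * Ring.inverse A = 1 := Ring.mul_inverse_cancel A h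
    calc A (Ring.inverse A y) = (A * Ring.inverse A) y := rfl
    _ = y := by rw [h1]; rfl

theorem key_lemma' {F : E → E} (hF : ContDiff ℝ 1 F) {C : ℝ} (hC : 1 ≤ C)
    (hrinv : ∀ y, IsUnit (fderiv ℝ F y))
    (hCn : ∀ y, ‖Ring.inverse (fderiv ℝ F y)‖ ≤ C)
    (hCinv : ∀ y u, ‖u‖ ≤ C * ‖fderiv ℝ F y u‖)
    (K : Set E) (hK : IsCompact K) :
    ∃ r > 0, (∀ y₀ ∈ K, ∀ x ∈ closedBall y₀ r, ∀ x' ∈ closedBall y₀ r,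
        ‖x - x'‖ ≤ 2 * C * ‖F x - F x'‖) ∧
      ∀ y₀ ∈ K, SurjOn F (closedBall y₀ r) (closedBall (F y₀) (r / (2 * C))) := by
  have hC0 : (0:ℝ) < C := lt_of_lt_of_le one_pos hC
  set A : E → (E →L[ℝ] E) := fun y => fderiv ℝ F y with hA
  have hAc : Continuous A := hF.continuous_fderiv one_ne_zero
  set K₁ : Set E := cthickening 1 K with hK₁def
  have hK₁ : IsCompact K₁ := hK.cthickening
  have huc : UniformContinuousOn A K₁ :=
    hK₁.uniformContinuousOn_of_continuous hAc.continuousOn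
  obtain ⟨δ, hδ0, hδ⟩ := Metric.uniformContinuousOn_iff.1 huc (1/(2*C)) (by positivity)
  refine ⟨min (δ/2) 1, by positivity, ?_⟩
  set r := min (δ/2) 1 with hrdef
  have hr1 : r ≤ 1 := min_le_right _ _
  have hrδ : r < δ := lt_of_le_of_lt (min_le_left _ _) (by linarith)
  have hr0 : (0:ℝ) < r := by positivity
  -- closedBall y₀ r ⊆ K₁
  have hball : ∀ y₀ ∈ K, closedBall y₀ r ⊆ K₁ := by
    intro y₀ hy₀ x hx
    exact mem_cthickening_of_dist_le x y₀ 1 K hy₀ (le_trans (mem_closedBall.1 hx) hr1)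
  -- approximation
  have happrox : ∀ y₀ ∈ K, ∀ x ∈ closedBall y₀ r, ∀ x' ∈ closedBall y₀ r,
      ‖F x - F x' - A y₀ (x - x')‖ ≤ (1/(2*C)) * ‖x - x'‖ := by
    intro y₀ hy₀ x hx x' hx'
    have hdiff := hF.differentiable one_ne_zero
    have h1 : ∀ z ∈ closedBall y₀ r, HasFDerivWithinAt (fun w => F w - A y₀ w)
        (A z - A y₀) (closedBall y₀ r) z := by
      intro z hz
      exact ((hdiff z).hasFDerivAt.hasFDerivWithinAt).sub ((A y₀).hasFDerivAt.hasFDerivWithinAt)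
    have h2 : ∀ z ∈ closedBall y₀ r, ‖A z - A y₀‖ ≤ 1/(2*C) := by
      intro z hz
      have hzK₁ : z ∈ K₁ := hball y₀ hy₀ hz
      have hy₀K₁ : y₀ ∈ K₁ := hball y₀ hy₀ (mem_closedBall_self hr0.le)
      have := hδ z hzK₁ y₀ hy₀K₁ (lt_of_le_of_lt (mem_closedBall.1 hz) hrδ)
      rw [dist_eq_norm] at this
      exact this.le
    have := Convex.norm_image_sub_le_of_norm_hasFDerivWithin_le h1 h2
      (convex_closedBall _ _) hx' hx
    calc ‖F x - F x' - A y₀ (x - x')‖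
        = ‖(fun w => F w - A y₀ w) x - (fun w => F w - A y₀ w) x'‖ := by
          simp only [map_sub]; congr 1; abel
      _ ≤ (1/(2*C)) * ‖x - x'‖ := this
  constructor
  · intro y₀ hy₀ x hx x' hx'
    have h1 := hCinv y₀ (x - x')
    have h2 := happrox y₀ hy₀ x hx x' hx'
    have h3 : ‖A y₀ (x - x')‖ ≤ ‖F x - F x'‖ + (1/(2*C)) * ‖x - x'‖ := by
      calc ‖A y₀ (x - x')‖ = ‖(F x - F x') - (F x - F x' - A y₀ (x - x'))‖ := by
            congr 1; abel
        _ ≤ ‖F x - F x'‖ + ‖F x - F x' - A y₀ (x - x')‖ := norm_sub_le _ _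
        _ ≤ ‖F x - F x'‖ + (1/(2*C)) * ‖x - x'‖ := by linarith
    have hCC : C * (1/(2*C)) = 1/2 := by field_simp
    nlinarith [norm_nonneg (F x - F x'), norm_nonneg (x - x')]
  · intro y₀ hy₀
    set c : NNReal := Real.toNNReal (1/(2*C)) with hc
    have hcc : (c:ℝ) = 1/(2*C) := Real.coe_toNNReal _ (by positivity)
    have hap : ApproximatesLinearOn F (A y₀) (closedBall y₀ r) c := by
      intro x hx x' hx'
      rw [hcc]; exact happrox y₀ hy₀ x hx x' hx'
    have hsurj := hap.surjOn_closedBall_of_nonlinearRightInverse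
      (ringRightInv (A y₀) (hrinv y₀)) hr0.le (subset_refl _)
    refine SurjOn.mono (subset_refl _) ?_ hsurj
    apply closedBall_subset_closedBall
    have hN : ((ringRightInv (A y₀) (hrinv y₀)).nnnorm : ℝ) = ‖Ring.inverse (A y₀)‖ := rfl
    have hNpos : (0:ℝ) < ‖Ring.inverse (A y₀)‖ := by
      by_contra h
      push_neg at h
      have h0 : Ring.inverse (A y₀) = 0 := by rwa [norm_le_zero_iff] at h
      have h1 := Ring.inverse_mul_cancel (A y₀) (hrinv y₀)
      rw [h0, zero_mul] at h1
      obtain ⟨u, hu⟩ := exists_ne (0:E)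
      have h2 : (0 : E →L[ℝ] E) u = (1 : E →L[ℝ] E) u := by rw [h1]
      simp only [ContinuousLinearMap.zero_apply, ContinuousLinearMap.one_apply] at h2
      exact hu h2.symm
    have hNC : ‖Ring.inverse (A y₀)‖ ≤ C := hCn y₀
    have hNinv : C⁻¹ ≤ (‖Ring.inverse (A y₀)‖)⁻¹ := by
      apply inv_anti₀ hNpos hNC
    rw [hN, hcc]
    have : r / (2*C) = (1/(2*C)) * r := by ring
    rw [this]
    apply mul_le_mul_of_nonneg_right _ hr0.le
    have : (1:ℝ)/(2*C) = C⁻¹ - 1/(2*C) := by field_simp; ring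
    linarith [hNinv]


theorem lift_close' {F : E → E} {C r T δ : ℝ} {K : Set E} (hT : 0 ≤ T) (hr : 0 < r)
    (hC : 0 < C)
    (hlow : ∀ y₀ ∈ K, ∀ x ∈ closedBall y₀ r, ∀ x' ∈ closedBall y₀ r,
      ‖x - x'‖ ≤ 2 * C * ‖F x - F x'‖)
    {p₁ p₂ q₁ q₂ : ℝ → E} {L₁ L₂ : ℝ} (hL₁ : 0 ≤ L₁) (hL₂ : 0 ≤ L₂)
    (hq₁L : ∀ v ∈ Icc 0 T, ∀ w ∈ Icc 0 T, ‖q₁ v - q₁ w‖ ≤ L₁ * |v - w|)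
    (hq₂L : ∀ v ∈ Icc 0 T, ∀ w ∈ Icc 0 T, ‖q₂ v - q₂ w‖ ≤ L₂ * |v - w|)
    (hl₁ : ∀ v ∈ Icc 0 T, F (q₁ v) = p₁ v) (hl₂ : ∀ v ∈ Icc 0 T, F (q₂ v) = p₂ v)
    (h0 : q₁ 0 = q₂ 0) (hKq : ∀ v ∈ Icc 0 T, q₁ v ∈ K)
    (hδ : ∀ v ∈ Icc 0 T, ‖p₁ v - p₂ v‖ ≤ δ) (hδr : 4 * C * δ < r) :
    ∀ v ∈ Icc 0 T, ‖q₁ v - q₂ v‖ ≤ 2 * C * δ := by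
  have hδ0 : 0 ≤ δ := le_trans (norm_nonneg _) (hδ 0 ⟨le_refl 0, hT⟩)
  set A : Set ℝ := {u | u ∈ Icc 0 T ∧ ∀ v ∈ Icc 0 u, ‖q₁ v - q₂ v‖ ≤ 2 * C * δ} with hAdef
  have h0A : (0:ℝ) ∈ A := by
    refine ⟨⟨le_refl 0, hT⟩, ?_⟩
    intro v hv
    have : v = 0 := le_antisymm hv.2 hv.1
    rw [this, h0, sub_self, norm_zero]
    positivity
  have hbdd : BddAbove A := ⟨T, fun x hx => hx.1.2⟩
  have hne : A.Nonempty := ⟨0, h0A⟩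
  set m := sSup A with hm
  have hm0 : 0 ≤ m := le_csSup hbdd h0A
  have hmT : m ≤ T := csSup_le hne (fun x hx => hx.1.2)
  -- the bound holds on [0, m]
  have hmA : ∀ v ∈ Icc 0 m, ‖q₁ v - q₂ v‖ ≤ 2 * C * δ := by
    intro v hv
    refine le_of_forall_pos_le_add ?_
    intro η hη
    set η' := η / (L₁ + L₂ + 1) with hη'
    have hη'0 : 0 < η' := by positivity
    obtain ⟨u, huA, hu⟩ := exists_lt_of_lt_csSup hne (by linarith : m - η' < m)
    rcases le_or_gt v u with hvu | huv
    · have := huA.2 v ⟨hv.1, hvu⟩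
      linarith
    · -- u < v ≤ m, use Lipschitz
      have huT : u ∈ Icc 0 T := huA.1
      have hvT : v ∈ Icc 0 T := ⟨hv.1, le_trans hv.2 hmT⟩
      have h1 := hq₁L v hvT u huT
      have h2 := hq₂L u huT v hvT
      have h3 := huA.2 u ⟨huT.1, le_refl u⟩
      have hvu' : |v - u| ≤ η' := by
        rw [abs_of_pos (by linarith)]
        have : v ≤ m := hv.2
        linarith
      have key : ‖q₁ v - q₂ v‖ ≤ ‖q₁ v - q₁ u‖ + ‖q₁ u - q₂ u‖ + ‖q₂ u - q₂ v‖ := by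
        have := norm_add₃_le (a := q₁ v - q₁ u) (b := q₁ u - q₂ u) (c := q₂ u - q₂ v)
        have he : q₁ v - q₁ u + (q₁ u - q₂ u) + (q₂ u - q₂ v) = q₁ v - q₂ v := by abel
        rwa [he] at this
      have hb1 : ‖q₁ v - q₁ u‖ ≤ L₁ * η' := le_trans h1 (by nlinarith)
      have hb2 : ‖q₂ u - q₂ v‖ ≤ L₂ * η' := by
        have : |u - v| = |v - u| := abs_sub_comm u v
        rw [this] at h2
        exact le_trans h2 (by nlinarith)
      have hLη : L₁ * η' + L₂ * η' ≤ η := by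
        rw [hη']
        rw [div_eq_inv_mul]
        have h4 : (L₁ + L₂) ≤ (L₁ + L₂ + 1) := by linarith
        have h5 : 0 < L₁ + L₂ + 1 := by linarith
        rw [← add_mul]
        calc (L₁ + L₂) * ((L₁ + L₂ + 1)⁻¹ * η) ≤ (L₁ + L₂ + 1) * ((L₁ + L₂ + 1)⁻¹ * η) := by
              apply mul_le_mul_of_nonneg_right h4; positivity
          _ = η := by field_simp
      linarith
  have hmemA : m ∈ A := ⟨⟨hm0, hmT⟩, hmA⟩
  -- m = T
  have hmT' : m = T := by
    by_contra hne'
    have hmT2 : m < T := lt_of_le_of_ne hmT hne'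
    set η := min (T - m) (r / (4 * (L₁ + L₂ + 1))) with hηdef
    have hη0 : 0 < η := by
      apply lt_min (by linarith)
      positivity
    have hLη : (L₁ + L₂) * η ≤ r / 4 := by
      have h1 : η ≤ r / (4 * (L₁ + L₂ + 1)) := min_le_right _ _
      have h5 : (0:ℝ) < L₁ + L₂ + 1 := by linarith
      calc (L₁ + L₂) * η ≤ (L₁ + L₂ + 1) * (r / (4 * (L₁ + L₂ + 1))) := by
            apply mul_le_mul (by linarith) h1 (le_of_lt hη0) (by linarith)
        _ = r / 4 := by field_simp
    have hstep : m + η ∈ A := by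
      refine ⟨⟨by linarith, by linarith [min_le_left (T - m) (r / (4 * (L₁ + L₂ + 1)))]⟩, ?_⟩
      intro v hv
      rcases le_or_gt v m with hvm | hmv
      · exact hmA v ⟨hv.1, hvm⟩
      · have hvT : v ∈ Icc 0 T := ⟨hv.1, by
          have := min_le_left (T - m) (r / (4 * (L₁ + L₂ + 1)))
          linarith [hv.2]⟩
        have hmIcc : m ∈ Icc 0 T := ⟨hm0, hmT⟩
        have hvm' : |v - m| ≤ η := by
          rw [abs_of_pos (by linarith)]
          linarith [hv.2]
        have hq1 : ‖q₁ v - q₁ m‖ ≤ L₁ * η :=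
          le_trans (hq₁L v hvT m hmIcc) (by nlinarith)
        have hq2 : ‖q₂ v - q₂ m‖ ≤ L₂ * η :=
          le_trans (hq₂L v hvT m hmIcc) (by nlinarith)
        have hqm : ‖q₁ m - q₂ m‖ ≤ 2 * C * δ := hmA m ⟨hm0, le_refl m⟩
        -- both q₁ v and q₂ v in closedBall (q₁ m) r
        have hball1 : q₁ v ∈ closedBall (q₁ m) r := by
          rw [mem_closedBall, dist_eq_norm]
          nlinarith
        have hball2 : q₂ v ∈ closedBall (q₁ m) r := by
          rw [mem_closedBall, dist_eq_norm]
          have : ‖q₂ v - q₁ m‖ ≤ ‖q₂ v - q₂ m‖ + ‖q₂ m - q₁ m‖ := by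
            have h := norm_add_le (q₂ v - q₂ m) (q₂ m - q₁ m)
            have he : q₂ v - q₂ m + (q₂ m - q₁ m) = q₂ v - q₁ m := by abel
            rwa [he] at h
          have h2 : ‖q₂ m - q₁ m‖ = ‖q₁ m - q₂ m‖ := norm_sub_rev _ _
          nlinarith
        have := hlow (q₁ m) (hKq m hmIcc) (q₁ v) hball1 (q₂ v) hball2
        rw [hl₁ v hvT, hl₂ v hvT] at this
        calc ‖q₁ v - q₂ v‖ ≤ 2 * C * ‖p₁ v - p₂ v‖ := this
          _ ≤ 2 * C * δ := by
            apply mul_le_mul_of_nonneg_left (hδ v hvT) (by linarith)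
    have : m + η ≤ m := le_csSup hbdd hstep
    linarith
  intro v hv
  exact hmA v (hmT' ▸ hv)


/-- A lift of a Lipschitz path exists up to time 1 -/
theorem lift_exists' {F : E → E} (hFc : Continuous F) {C r Λ : ℝ} (hC : 1 ≤ C) (hr : 0 < r)
    (hΛ : 0 ≤ Λ) {a : E}
    (hlow : ∀ y₀ ∈ closedBall a (2*C*Λ), ∀ x ∈ closedBall y₀ r, ∀ x' ∈ closedBall y₀ r,
      ‖x - x'‖ ≤ 2 * C * ‖F x - F x'‖)
    (hsurj : ∀ y₀ ∈ closedBall a (2*C*Λ),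
      SurjOn F (closedBall y₀ r) (closedBall (F y₀) (r / (2*C))))
    {p : ℝ → E} (hp : ∀ v w : ℝ, ‖p v - p w‖ ≤ Λ * |v - w|) (hp0 : p 0 = F a) :
    ∃ q : ℝ → E, q 0 = a ∧ (∀ v ∈ Icc 0 1, F (q v) = p v) ∧
      ∀ v ∈ Icc 0 1, ∀ w ∈ Icc 0 1, ‖q v - q w‖ ≤ 2 * C * Λ * |v - w| := by
  classical
  have hC0 : (0:ℝ) < C := lt_of_lt_of_le one_pos hC
  set W : ℝ → (ℝ → E) → Prop := fun u q => q 0 = a ∧ (∀ v ∈ Icc 0 u, F (q v) = p v) ∧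
      ∀ v ∈ Icc 0 u, ∀ w ∈ Icc 0 u, ‖q v - q w‖ ≤ 2 * C * Λ * |v - w| with hW
  set S : Set ℝ := {u | u ∈ Icc (0:ℝ) 1 ∧ ∃ q : ℝ → E, W u q} with hS
  have hwit_ball : ∀ u ∈ Icc (0:ℝ) 1, ∀ q : ℝ → E, W u q →
      ∀ v ∈ Icc 0 u, q v ∈ closedBall a (2*C*Λ) := by
    intro u hu q hq v hv
    rw [mem_closedBall, dist_eq_norm]
    have h0u : (0:ℝ) ∈ Icc 0 u := ⟨le_refl 0, le_trans hv.1 hv.2⟩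
    have h := hq.2.2 v hv 0 h0u
    rw [hq.1] at h
    calc ‖q v - a‖ ≤ 2*C*Λ * |v - 0| := h
      _ = 2*C*Λ * v := by rw [sub_zero, abs_of_nonneg hv.1]
      _ ≤ 2*C*Λ * 1 := by
        apply mul_le_mul_of_nonneg_left (le_trans hv.2 hu.2) (by positivity)
      _ = 2*C*Λ := mul_one _
  have huniq : ∀ u ∈ Icc (0:ℝ) 1, ∀ q q' : ℝ → E, W u q → W u q' →
      ∀ v ∈ Icc 0 u, q v = q' v := by
    intro u hu q q' hq hq' v hv
    have h := lift_close' (F := F) (C := C) (r := r) (T := u) (δ := 0)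
      (K := closedBall a (2*C*Λ)) hu.1 hr hC0 hlow
      (by positivity : (0:ℝ) ≤ 2*C*Λ) (by positivity : (0:ℝ) ≤ 2*C*Λ)
      hq.2.2 hq'.2.2 hq.2.1 hq'.2.1 (hq.1.trans hq'.1.symm)
      (hwit_ball u hu q hq)
      (fun v _ => by rw [sub_self, norm_zero])
      (by linarith)
    have h2 := h v hv
    rw [mul_zero] at h2
    have h3 : ‖q v - q' v‖ = 0 := le_antisymm h2 (norm_nonneg _)
    rwa [norm_eq_zero, sub_eq_zero] at h3
  have h0S : (0:ℝ) ∈ S := by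
    refine ⟨⟨le_refl 0, zero_le_one⟩, fun _ => a, rfl, ?_, ?_⟩
    · intro v hv
      have : v = 0 := le_antisymm hv.2 hv.1
      rw [this, hp0]
    · intro v _ w _
      rw [sub_self, norm_zero]; positivity
  have hSne : S.Nonempty := ⟨0, h0S⟩
  have hSbdd : BddAbove S := ⟨1, fun x hx => hx.1.2⟩
  have hSdc : ∀ u ∈ S, ∀ u', 0 ≤ u' → u' ≤ u → u' ∈ S := by
    rintro u ⟨hu, q, hq⟩ u' h0' hu'
    exact ⟨⟨h0', le_trans hu' hu.2⟩, q, hq.1,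
      fun v hv => hq.2.1 v ⟨hv.1, le_trans hv.2 hu'⟩,
      fun v hv w hw => hq.2.2 v ⟨hv.1, le_trans hv.2 hu'⟩ w ⟨hw.1, le_trans hw.2 hu'⟩⟩
  set m := sSup S with hm
  have hm0 : 0 ≤ m := le_csSup hSbdd h0S
  have hm1 : m ≤ 1 := csSup_le hSne (fun x hx => hx.1.2)
  have hpc : Continuous p := by
    rcases eq_or_lt_of_le hΛ with h | h
    · have : ∀ v, p v = p 0 := by
        intro v
        have := hp v 0
        rw [← h, zero_mul] at this
        have h2 : ‖p v - p 0‖ = 0 := le_antisymm this (norm_nonneg _)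
        rwa [norm_eq_zero, sub_eq_zero] at h2
      have : p = fun _ => p 0 := funext this
      rw [this]; exact continuous_const
    · have : LipschitzWith (Real.toNNReal Λ) p := by
        apply LipschitzWith.of_dist_le_mul
        intro v w
        rw [dist_eq_norm, Real.dist_eq, Real.coe_toNNReal _ hΛ]
        exact hp v w
      exact this.continuous
  -- m ∈ S
  have hmS : m ∈ S := by
    rcases eq_or_lt_of_le hm0 with h | hm0'
    · rwa [← h]
    have hlt : ∀ v, 0 ≤ v → v < m → v ∈ S := by
      intro v h0v hvm
      obtain ⟨u, huS, hu⟩ := exists_lt_of_lt_csSup hSne hvm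
      exact hSdc u huS v h0v hu.le
    set Q : ℝ → E := fun v => if h : v ∈ S then Classical.choose h.2 v else a with hQ
    have hQspec : ∀ u ∈ S, ∀ v ∈ Icc 0 u, ∀ q : ℝ → E, W u q → Q v = q v := by
      intro u huS v hv q hq
      have hvS : v ∈ S := hSdc u huS v hv.1 hv.2
      have hq' : W v (Classical.choose hvS.2) := Classical.choose_spec hvS.2
      have hqv : W v q := ⟨hq.1, fun w hw => hq.2.1 w ⟨hw.1, le_trans hw.2 hv.2⟩,
        fun w hw w' hw' => hq.2.2 w ⟨hw.1, le_trans hw.2 hv.2⟩ w' ⟨hw'.1, le_trans hw'.2 hv.2⟩⟩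
      have h := huniq v hvS.1 (Classical.choose hvS.2) q hq' hqv v ⟨hv.1, le_refl v⟩
      rw [hQ]
      simp only [dif_pos hvS]
      exact h
    have hQ0 : Q 0 = a := by
      have h := Classical.choose_spec h0S.2
      have h2 := hQspec 0 h0S 0 ⟨le_refl 0, le_refl 0⟩ _ h
      rw [h2, h.1]
    have hQF : ∀ v, 0 ≤ v → v < m → F (Q v) = p v := by
      intro v h0v hvm
      have hvS := hlt v h0v hvm
      obtain ⟨_, q, hq⟩ := hvS
      rw [hQspec v (hlt v h0v hvm) v ⟨h0v, le_refl v⟩ q hq]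
      exact hq.2.1 v ⟨h0v, le_refl v⟩
    have hQL : ∀ v, 0 ≤ v → v < m → ∀ w, 0 ≤ w → w < m →
        ‖Q v - Q w‖ ≤ 2*C*Λ * |v - w| := by
      intro v h0v hvm w h0w hwm
      have huS : max v w ∈ S := hlt (max v w) (le_trans h0v (le_max_left _ _)) (max_lt hvm hwm)
      obtain ⟨huIcc, q, hq⟩ := huS
      rw [hQspec (max v w) ⟨huIcc, q, hq⟩ v ⟨h0v, le_max_left _ _⟩ q hq,
        hQspec (max v w) ⟨huIcc, q, hq⟩ w ⟨h0w, le_max_right _ _⟩ q hq]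
      exact hq.2.2 v ⟨h0v, le_max_left _ _⟩ w ⟨h0w, le_max_right _ _⟩
    -- approximating sequence
    set u : ℕ → ℝ := fun n => m * (n / (n+1)) with hudef
    have hun : ∀ n : ℕ, 0 ≤ u n ∧ u n < m := by
      intro n
      have h1 : (0:ℝ) < n + 1 := by positivity
      have h2 : (n:ℝ) / (n+1) < 1 := by
        rw [div_lt_one h1]; linarith
      constructor
      · apply mul_nonneg hm0 (by positivity)
      · calc u n = m * (n / (n+1)) := rfl
          _ < m * 1 := by apply mul_lt_mul_of_pos_left h2 hm0'
          _ = m := mul_one m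
    have hutend : Tendsto u atTop (𝓝 m) := by
      have h1 : Tendsto (fun n : ℕ => (n:ℝ) / (n+1)) atTop (𝓝 1) := by
        have := tendsto_natCast_div_add_atTop (1 : ℝ)
        exact this
      have h2 := h1.const_mul m
      rw [mul_one] at h2
      exact h2
    have hcu : CauchySeq u := hutend.cauchySeq
    have hcQ : CauchySeq (fun n => Q (u n)) := by
      rw [Metric.cauchySeq_iff]
      intro ε hε
      obtain ⟨N, hN⟩ := Metric.cauchySeq_iff.1 hcu (ε / (2*C*Λ+1)) (by positivity)
      refine ⟨N, fun n hn k hk => ?_⟩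
      have h1 := hN n hn k hk
      have h2 := hQL (u n) (hun n).1 (hun n).2 (u k) (hun k).1 (hun k).2
      rw [dist_eq_norm]
      rw [Real.dist_eq] at h1
      calc ‖Q (u n) - Q (u k)‖ ≤ 2*C*Λ * |u n - u k| := h2
        _ ≤ (2*C*Λ+1) * |u n - u k| := by
            apply mul_le_mul_of_nonneg_right (by linarith) (abs_nonneg _)
        _ < (2*C*Λ+1) * (ε / (2*C*Λ+1)) := by
            apply mul_lt_mul_of_pos_left h1 (by positivity)
        _ = ε := by field_simp
    obtain ⟨xlim, hxlim⟩ := cauchySeq_tendsto_of_complete hcQ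
    have hkey : ∀ v, 0 ≤ v → v < m → ‖Q v - xlim‖ ≤ 2*C*Λ * |v - m| := by
      intro v h0v hvm
      have h1 : Tendsto (fun n => ‖Q v - Q (u n)‖) atTop (𝓝 ‖Q v - xlim‖) :=
        ((tendsto_const_nhds.sub hxlim).norm)
      have h2 : Tendsto (fun n => 2*C*Λ * |v - u n|) atTop (𝓝 (2*C*Λ * |v - m|)) := by
        apply Tendsto.const_mul
        exact ((tendsto_const_nhds.sub hutend).abs)
      exact le_of_tendsto_of_tendsto' h1 h2
        (fun n => hQL v h0v hvm (u n) (hun n).1 (hun n).2)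
    have hFxlim : F xlim = p m := by
      have h1 : Tendsto (fun n => F (Q (u n))) atTop (𝓝 (F xlim)) :=
        (hFc.tendsto xlim).comp hxlim
      have h2 : (fun n => F (Q (u n))) = fun n => p (u n) := by
        funext n
        exact hQF (u n) (hun n).1 (hun n).2
      rw [h2] at h1
      have h3 : Tendsto (fun n => p (u n)) atTop (𝓝 (p m)) :=
        (hpc.tendsto m).comp hutend
      exact tendsto_nhds_unique h1 h3
    refine ⟨⟨hm0, hm1⟩, fun v => if v < m then Q v else xlim, ?_, ?_, ?_⟩
    · simp only [if_pos hm0']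
      exact hQ0
    · intro v hv
      by_cases h : v < m
      · simp only [if_pos h]
        exact hQF v hv.1 h
      · have : v = m := le_antisymm hv.2 (not_lt.1 h)
        simp only [if_neg h]
        rw [this]
        exact hFxlim
    · intro v hv w hw
      by_cases h1 : v < m <;> by_cases h2 : w < m
      · simp only [if_pos h1, if_pos h2]
        exact hQL v hv.1 h1 w hw.1 h2
      · have hwm : w = m := le_antisymm hw.2 (not_lt.1 h2)
        simp only [if_pos h1, if_neg h2]
        rw [hwm]
        exact hkey v hv.1 h1
      · have hvm : v = m := le_antisymm hv.2 (not_lt.1 h1)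
        simp only [if_neg h1, if_pos h2]
        rw [hvm]
        calc ‖xlim - Q w‖ = ‖Q w - xlim‖ := norm_sub_rev _ _
          _ ≤ 2*C*Λ * |w - m| := hkey w hw.1 h2
          _ = 2*C*Λ * |m - w| := by rw [abs_sub_comm]
      · have hvm : v = m := le_antisymm hv.2 (not_lt.1 h1)
        have hwm : w = m := le_antisymm hw.2 (not_lt.1 h2)
        simp only [if_neg h1, if_neg h2]
        rw [hvm, hwm, sub_self, norm_zero]
        positivity
  -- m = 1
  have hm1' : m = 1 := by
    by_contra hne'
    have hmlt : m < 1 := lt_of_le_of_ne hm1 hne'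
    obtain ⟨hmIcc, q, hq⟩ := hmS
    set y₀ := q m with hy₀
    have hy₀ball : y₀ ∈ closedBall a (2*C*Λ) :=
      hwit_ball m hmIcc q hq m ⟨hm0, le_refl m⟩
    have hFy₀ : F y₀ = p m := hq.2.1 m ⟨hm0, le_refl m⟩
    set ε := min (1 - m) (r / (2*C*(Λ+1))) with hεdef
    have hε0 : 0 < ε := lt_min (by linarith) (by positivity)
    have hε1 : ε ≤ 1 - m := min_le_left _ _
    have hε2 : ε ≤ r / (2*C*(Λ+1)) := min_le_right _ _
    have hΛε : Λ * ε ≤ r / (2*C) := by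
      calc Λ * ε ≤ Λ * (r / (2*C*(Λ+1))) := by
            apply mul_le_mul_of_nonneg_left hε2 hΛ
        _ ≤ (Λ+1) * (r / (2*C*(Λ+1))) := by
            apply mul_le_mul_of_nonneg_right (by linarith) (by positivity)
        _ = r / (2*C) := by field_simp
    have hmem : ∀ v, m ≤ v → v ≤ m + ε → p v ∈ closedBall (F y₀) (r / (2*C)) := by
      intro v hv1 hv2
      rw [mem_closedBall, dist_eq_norm, hFy₀]
      calc ‖p v - p m‖ ≤ Λ * |v - m| := hp v m
        _ = Λ * (v - m) := by rw [abs_of_nonneg (by linarith)]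
        _ ≤ Λ * ε := by apply mul_le_mul_of_nonneg_left (by linarith) hΛ
        _ ≤ r / (2*C) := hΛε
    set g : ℝ → E := fun v => if h : p v ∈ closedBall (F y₀) (r / (2*C)) then
        Classical.choose (hsurj y₀ hy₀ball h) else a with hg
    have hgspec : ∀ v, m ≤ v → v ≤ m + ε → g v ∈ closedBall y₀ r ∧ F (g v) = p v := by
      intro v hv1 hv2
      have h := hmem v hv1 hv2
      have hsp := Classical.choose_spec (hsurj y₀ hy₀ball h)
      rw [hg]
      simp only [dif_pos h]
      exact ⟨hsp.1, hsp.2⟩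
    have hgm : g m = y₀ := by
      have h1 := hgspec m (le_refl m) (by linarith)
      have h2 := hlow y₀ hy₀ball (g m) h1.1 y₀ (mem_closedBall_self (by linarith))
      rw [h1.2, hFy₀, sub_self, norm_zero, mul_zero] at h2
      have h3 : ‖g m - y₀‖ = 0 := le_antisymm h2 (norm_nonneg _)
      rwa [norm_eq_zero, sub_eq_zero] at h3
    -- glue bound: for v in (m, m+ε], distance control
    have hgl : ∀ v, m ≤ v → v ≤ m + ε → ∀ w, m ≤ w → w ≤ m + ε →
        ‖g v - g w‖ ≤ 2*C*Λ * |v - w| := by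
      intro v hv1 hv2 w hw1 hw2
      have h1 := hgspec v hv1 hv2
      have h2 := hgspec w hw1 hw2
      have h3 := hlow y₀ hy₀ball (g v) h1.1 (g w) h2.1
      rw [h1.2, h2.2] at h3
      calc ‖g v - g w‖ ≤ 2*C * ‖p v - p w‖ := h3
        _ ≤ 2*C * (Λ * |v - w|) := by
            apply mul_le_mul_of_nonneg_left (hp v w) (by positivity)
        _ = 2*C*Λ * |v - w| := by ring
    have hstep : m + ε ∈ S := by
      refine ⟨⟨by linarith, by linarith⟩, fun v => if v ≤ m then q v else g v, ?_, ?_, ?_⟩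
      · simp only [if_pos hm0]
        exact hq.1
      · intro v hv
        by_cases h : v ≤ m
        · simp only [if_pos h]
          exact hq.2.1 v ⟨hv.1, h⟩
        · simp only [if_neg h]
          exact (hgspec v (le_of_lt (not_le.1 h)) hv.2).2
      · intro v hv w hw
        by_cases h1 : v ≤ m <;> by_cases h2 : w ≤ m
        · simp only [if_pos h1, if_pos h2]
          exact hq.2.2 v ⟨hv.1, h1⟩ w ⟨hw.1, h2⟩
        · -- v ≤ m < w
          simp only [if_pos h1, if_neg h2]
          have hw1 : m ≤ w := le_of_lt (not_le.1 h2)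
          have ha1 : ‖q v - q m‖ ≤ 2*C*Λ * (m - v) := by
            have := hq.2.2 v ⟨hv.1, h1⟩ m ⟨hm0, le_refl m⟩
            rwa [abs_of_nonpos (by linarith), neg_sub] at this
          have ha2 : ‖y₀ - g w‖ ≤ 2*C*Λ * (w - m) := by
            rw [← hgm]
            have := hgl m (le_refl m) (by linarith) w hw1 hw.2
            rwa [abs_of_nonpos (by linarith), neg_sub] at this
          calc ‖q v - g w‖ = ‖(q v - q m) + (y₀ - g w)‖ := by rw [hy₀]; congr 1; abel
            _ ≤ ‖q v - q m‖ + ‖y₀ - g w‖ := norm_add_le _ _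
            _ ≤ 2*C*Λ * (m - v) + 2*C*Λ * (w - m) := by linarith
            _ = 2*C*Λ * (w - v) := by ring
            _ = 2*C*Λ * |v - w| := by rw [abs_of_nonpos (by linarith), neg_sub]
        · -- w ≤ m < v
          simp only [if_neg h1, if_pos h2]
          have hv1 : m ≤ v := le_of_lt (not_le.1 h1)
          have ha1 : ‖q w - q m‖ ≤ 2*C*Λ * (m - w) := by
            have := hq.2.2 w ⟨hw.1, h2⟩ m ⟨hm0, le_refl m⟩
            rwa [abs_of_nonpos (by linarith), neg_sub] at this
          have ha2 : ‖y₀ - g v‖ ≤ 2*C*Λ * (v - m) := by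
            rw [← hgm]
            have := hgl m (le_refl m) (by linarith) v hv1 hv.2
            rwa [abs_of_nonpos (by linarith), neg_sub] at this
          calc ‖g v - q w‖ = ‖(q w - q m) + (y₀ - g v)‖ := by
                rw [norm_sub_rev, hy₀]; congr 1; abel
            _ ≤ ‖q w - q m‖ + ‖y₀ - g v‖ := norm_add_le _ _
            _ ≤ 2*C*Λ * (m - w) + 2*C*Λ * (v - m) := by linarith
            _ = 2*C*Λ * (v - w) := by ring
            _ = 2*C*Λ * |v - w| := by rw [abs_of_nonneg (by linarith)]
        · simp only [if_neg h1, if_neg h2]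
          exact hgl v (le_of_lt (not_le.1 h1)) hv.2 w (le_of_lt (not_le.1 h2)) hw.2
    have : m + ε ≤ m := le_csSup hSbdd hstep
    linarith
  obtain ⟨hmIcc, q, hq⟩ := hmS
  rw [hm1'] at hq
  exact ⟨q, hq.1, hq.2.1, hq.2.2⟩

end CharFlowAux

theorem characteristic_flow_bijective (d : ℕ) (hd : 1 ≤ d)
    (v₀ : EuclideanSpace ℝ (Fin d) → EuclideanSpace ℝ (Fin d))
    (hv₀ : ContDiff ℝ 1 v₀) (t : ℝ) (ht : 0 ≤ t)
    (hinv : ∀ y, IsUnit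
      (ContinuousLinearMap.id ℝ (EuclideanSpace ℝ (Fin d)) + t • fderiv ℝ v₀ y))
    (hbdd : ∃ C : ℝ, ∀ y,
      ‖Ring.inverse (ContinuousLinearMap.id ℝ (EuclideanSpace ℝ (Fin d)) + t • fderiv ℝ v₀ y)‖ ≤ C) :
    Function.Bijective (fun y => y + t • v₀ y) := by
  classical
  haveI : Nonempty (Fin d) := ⟨⟨0, hd⟩⟩
  haveI : Nontrivial (EuclideanSpace ℝ (Fin d)) := by infer_instance
  set F : EuclideanSpace ℝ (Fin d) → EuclideanSpace ℝ (Fin d) :=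
    fun y => y + t • v₀ y with hFdef
  have hF : ContDiff ℝ 1 F := contDiff_id.add (hv₀.const_smul t)
  have hderiv : ∀ y, HasFDerivAt F
      (ContinuousLinearMap.id ℝ (EuclideanSpace ℝ (Fin d)) + t • fderiv ℝ v₀ y) y := by
    intro y
    exact (hasFDerivAt_id y).add
      ((((hv₀.differentiable one_ne_zero) y).hasFDerivAt).const_smul t)
  have hfd : ∀ y, fderiv ℝ F y
      = ContinuousLinearMap.id ℝ (EuclideanSpace ℝ (Fin d)) + t • fderiv ℝ v₀ y :=
    fun y => (hderiv y).fderiv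
  obtain ⟨C₀, hC₀⟩ := hbdd
  set C := max C₀ 1 with hCdef
  have hC : 1 ≤ C := le_max_right _ _
  have hC0 : (0:ℝ) < C := lt_of_lt_of_le one_pos hC
  have hrinv : ∀ y, IsUnit (fderiv ℝ F y) := fun y => by rw [hfd y]; exact hinv y
  have hCn : ∀ y, ‖Ring.inverse (fderiv ℝ F y)‖ ≤ C := fun y => by
    rw [hfd y]; exact le_trans (hC₀ y) (le_max_left _ _)
  have hCinv : ∀ y u, ‖u‖ ≤ C * ‖fderiv ℝ F y u‖ := by
    intro y u
    have h1 : Ring.inverse (fderiv ℝ F y) * fderiv ℝ F y = 1 :=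
      Ring.inverse_mul_cancel _ (hrinv y)
    have h2 : Ring.inverse (fderiv ℝ F y) (fderiv ℝ F y u) = u := by
      calc Ring.inverse (fderiv ℝ F y) (fderiv ℝ F y u)
          = (Ring.inverse (fderiv ℝ F y) * fderiv ℝ F y) u := rfl
        _ = u := by rw [h1]; rfl
    calc ‖u‖ = ‖Ring.inverse (fderiv ℝ F y) (fderiv ℝ F y u)‖ := by rw [h2]
      _ ≤ ‖Ring.inverse (fderiv ℝ F y)‖ * ‖fderiv ℝ F y u‖ :=
          (Ring.inverse (fderiv ℝ F y)).le_opNorm _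
      _ ≤ C * ‖fderiv ℝ F y u‖ :=
          mul_le_mul_of_nonneg_right (hCn y) (norm_nonneg _)
  constructor
  · -- injectivity
    intro a b hab
    have hab' : F a = F b := hab
    set z := F a with hz
    -- clamped parameter
    set c : ℝ → ℝ := fun u => max (min u 1) 0 with hc
    have hclip : ∀ v w, |c v - c w| ≤ |v - w| := by
      intro v w
      calc |c v - c w| ≤ |min v 1 - min w 1| := abs_max_sub_max_le_abs _ _ _
        _ ≤ max |v - w| |(1:ℝ) - 1| := abs_min_sub_min_le_max _ _ _ _
        _ = |v - w| := by rw [sub_self, abs_zero]; exact max_eq_left (abs_nonneg _)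
    have hc0 : c 0 = 0 := by simp [hc]
    have hc1 : c 1 = 1 := by norm_num [hc]
    have hcIcc : ∀ u, c u ∈ Icc (0:ℝ) 1 := by
      intro u
      refine ⟨le_max_right _ _, ?_⟩
      apply max_le (min_le_right _ _) zero_le_one
    have hcid : ∀ u ∈ Icc (0:ℝ) 1, c u = u := by
      intro u hu
      rw [hc]
      simp only [min_eq_left hu.2, max_eq_left hu.1]
    set γ : ℝ → EuclideanSpace ℝ (Fin d) := fun u => a + c u • (b - a) with hγ
    have hγ0 : γ 0 = a := by simp [hγ, hc0]
    have hγ1 : γ 1 = b := by simp [hγ, hc1]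
    have hγlip : ∀ v w, ‖γ v - γ w‖ ≤ ‖b - a‖ * |v - w| := by
      intro v w
      have : γ v - γ w = (c v - c w) • (b - a) := by
        rw [hγ]; simp only [add_sub_add_left_eq_sub, ← sub_smul]
      rw [this, norm_smul, Real.norm_eq_abs, mul_comm]
      apply mul_le_mul_of_nonneg_left (hclip v w) (norm_nonneg _)
    -- segment and derivative bound
    set Sseg : Set (EuclideanSpace ℝ (Fin d)) :=
      (fun θ : ℝ => a + θ • (b - a)) '' Icc 0 1 with hSseg
    have hSsegeq : Sseg = segment ℝ a b := (segment_eq_image' ℝ a b).symm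
    have hSc : IsCompact Sseg :=
      isCompact_Icc.image (by continuity)
    have hγmem : ∀ u, γ u ∈ Sseg := fun u => ⟨c u, hcIcc u, rfl⟩
    obtain ⟨M, hM⟩ := hSc.exists_bound_of_continuousOn
      ((hF.continuous_fderiv one_ne_zero).continuousOn (s := Sseg))
    set M' := max M 0 with hM'
    have hM'0 : 0 ≤ M' := le_max_right _ _
    have hMb : ∀ x ∈ Sseg, ‖fderiv ℝ F x‖ ≤ M' := fun x hx =>
      le_trans (hM x hx) (le_max_left _ _)
    set β : ℝ → EuclideanSpace ℝ (Fin d) := fun u => F (γ u) with hβ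
    have hβlip : ∀ v w, ‖β v - β w‖ ≤ (M' * ‖b - a‖) * |v - w| := by
      intro v w
      have h1 : ‖F (γ v) - F (γ w)‖ ≤ M' * ‖γ v - γ w‖ := by
        apply Convex.norm_image_sub_le_of_norm_fderiv_le
          (fun x _ => (hF.differentiable one_ne_zero) x) hMb
          (hSsegeq ▸ convex_segment a b) (hγmem w) (hγmem v)
      calc ‖β v - β w‖ ≤ M' * ‖γ v - γ w‖ := h1
        _ ≤ M' * (‖b - a‖ * |v - w|) :=
            mul_le_mul_of_nonneg_left (hγlip v w) hM'0
        _ = (M' * ‖b - a‖) * |v - w| := by ring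
    set Λ := M' * ‖b - a‖ with hΛdef
    have hΛ : 0 ≤ Λ := mul_nonneg hM'0 (norm_nonneg _)
    have hβ0 : β 0 = z := by simp only [hβ, hγ0, hz]
    have hβ1 : β 1 = z := by
      simp only [hβ, hγ1, hz]
      exact hab'.symm
    have hβz : ∀ v ∈ Icc (0:ℝ) 1, ‖β v - z‖ ≤ Λ := by
      intro v hv
      rw [← hβ0]
      calc ‖β v - β 0‖ ≤ Λ * |v - 0| := hβlip v 0
        _ = Λ * v := by rw [sub_zero, abs_of_nonneg hv.1]
        _ ≤ Λ * 1 := mul_le_mul_of_nonneg_left hv.2 hΛ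
        _ = Λ := mul_one _
    set P : ℝ → ℝ → EuclideanSpace ℝ (Fin d) := fun s u => z + s • (β u - z) with hP
    have hPlip : ∀ s ∈ Icc (0:ℝ) 1, ∀ v w : ℝ, ‖P s v - P s w‖ ≤ Λ * |v - w| := by
      intro s hs v w
      have h1 : P s v - P s w = s • (β v - β w) := by
        rw [hP]; simp only [add_sub_add_left_eq_sub, ← smul_sub]
        congr 1; abel
      rw [h1, norm_smul, Real.norm_eq_abs, abs_of_nonneg hs.1]
      calc s * ‖β v - β w‖ ≤ 1 * ‖β v - β w‖ :=
            mul_le_mul_of_nonneg_right hs.2 (norm_nonneg _)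
        _ = ‖β v - β w‖ := one_mul _
        _ ≤ Λ * |v - w| := hβlip v w
    have hP0 : ∀ s, P s 0 = F a := by
      intro s
      simp only [hP, hβ0, sub_self, smul_zero, add_zero, hz]
    have hP1 : ∀ s, P s 1 = z := by
      intro s
      simp only [hP, hβ1, sub_self, smul_zero, add_zero]
    obtain ⟨r, hr, hlow, hsurjK⟩ := key_lemma' hF hC hrinv hCn hCinv
      (closedBall a (2*C*Λ)) (isCompact_closedBall _ _)
    have hlift : ∀ s, s ∈ Icc (0:ℝ) 1 → ∃ q : ℝ → EuclideanSpace ℝ (Fin d), q 0 = a ∧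
        (∀ v ∈ Icc 0 1, F (q v) = P s v) ∧
        ∀ v ∈ Icc 0 1, ∀ w ∈ Icc 0 1, ‖q v - q w‖ ≤ 2 * C * Λ * |v - w| := by
      intro s hs
      exact lift_exists' hF.continuous hC hr hΛ hlow hsurjK (hPlip s hs) (hP0 s)
    set q : ℝ → ℝ → EuclideanSpace ℝ (Fin d) := fun s => if h : s ∈ Icc (0:ℝ) 1 then
      Classical.choose (hlift s h) else fun _ => a with hqdef
    have hq : ∀ s (hs : s ∈ Icc (0:ℝ) 1), (q s) 0 = a ∧
        (∀ v ∈ Icc 0 1, F (q s v) = P s v) ∧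
        ∀ v ∈ Icc 0 1, ∀ w ∈ Icc 0 1, ‖q s v - q s w‖ ≤ 2 * C * Λ * |v - w| := by
      intro s hs
      rw [hqdef]
      simp only [dif_pos hs]
      exact Classical.choose_spec (hlift s hs)
    have hqball : ∀ s (hs : s ∈ Icc (0:ℝ) 1), ∀ v ∈ Icc (0:ℝ) 1,
        q s v ∈ closedBall a (2*C*Λ) := by
      intro s hs v hv
      rw [mem_closedBall, dist_eq_norm]
      have h1 := (hq s hs).2.2 v hv 0 ⟨le_refl 0, zero_le_one⟩
      rw [(hq s hs).1] at h1
      calc ‖q s v - a‖ ≤ 2*C*Λ * |v - 0| := h1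
        _ = 2*C*Λ * v := by rw [sub_zero, abs_of_nonneg hv.1]
        _ ≤ 2*C*Λ * 1 := mul_le_mul_of_nonneg_left hv.2 (by positivity)
        _ = 2*C*Λ := mul_one _
    -- step: nearby parameters give the same endpoint
    set θ := r / (8*C*(Λ+1)) with hθdef
    have hθ0 : 0 < θ := by positivity
    have hstep : ∀ s ∈ Icc (0:ℝ) 1, ∀ s' ∈ Icc (0:ℝ) 1, |s - s'| ≤ θ →
        q s 1 = q s' 1 := by
      intro s hs s' hs' hss'
      set δ := Λ * |s - s'| with hδdef
      have hδ0 : 0 ≤ δ := mul_nonneg hΛ (abs_nonneg _)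
      have hδb : ∀ v ∈ Icc (0:ℝ) 1, ‖P s v - P s' v‖ ≤ δ := by
        intro v hv
        have h1 : P s v - P s' v = (s - s') • (β v - z) := by
          rw [hP]; simp only [add_sub_add_left_eq_sub, ← sub_smul]
        rw [h1, norm_smul, Real.norm_eq_abs, hδdef, mul_comm]
        exact mul_le_mul_of_nonneg_right (hβz v hv) (abs_nonneg _)
      have hδr : 4 * C * δ < r := by
        have h1 : Λ * |s - s'| ≤ Λ * θ := mul_le_mul_of_nonneg_left hss' hΛ
        have h2 : 4 * C * (Λ * θ) ≤ r / 2 := by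
          have hΛ1 : Λ / (Λ + 1) ≤ 1 := by
            rw [div_le_one (by linarith)]; linarith
          have hCne : C ≠ 0 := ne_of_gt hC0
          have hΛne : Λ + 1 ≠ 0 := by positivity
          have he : 4*C*(Λ*θ) = (Λ/(Λ+1)) * (r/2) := by
            rw [hθdef]; field_simp; ring
          rw [he]
          calc (Λ/(Λ+1)) * (r/2) ≤ 1 * (r/2) :=
                mul_le_mul_of_nonneg_right hΛ1 (by linarith)
            _ = r/2 := one_mul _
        nlinarith
      have hcl := lift_close' (F := F) (T := 1) zero_le_one hr hC0 hlow
        (by positivity : (0:ℝ) ≤ 2*C*Λ) (by positivity : (0:ℝ) ≤ 2*C*Λ)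
        (hq s hs).2.2 (hq s' hs').2.2 (hq s hs).2.1 (hq s' hs').2.1
        ((hq s hs).1.trans (hq s' hs').1.symm) (hqball s hs) hδb hδr
      have h3 := hcl 1 ⟨zero_le_one, le_refl 1⟩
      -- both endpoints are in the fiber of z
      have hf1 : F (q s 1) = z := by
        rw [(hq s hs).2.1 1 ⟨zero_le_one, le_refl 1⟩, hP1]
      have hf2 : F (q s' 1) = z := by
        rw [(hq s' hs').2.1 1 ⟨zero_le_one, le_refl 1⟩, hP1]
      have hy₀ : q s 1 ∈ closedBall a (2*C*Λ) := hqball s hs 1 ⟨zero_le_one, le_refl 1⟩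
      have hx1 : q s 1 ∈ closedBall (q s 1) r := mem_closedBall_self hr.le
      have hx2 : q s' 1 ∈ closedBall (q s 1) r := by
        rw [mem_closedBall, dist_comm, dist_eq_norm]
        nlinarith
      have h4 := hlow (q s 1) hy₀ (q s 1) hx1 (q s' 1) hx2
      rw [hf1, hf2, sub_self, norm_zero, mul_zero] at h4
      have h5 : ‖q s 1 - q s' 1‖ = 0 := le_antisymm h4 (norm_nonneg _)
      rwa [norm_eq_zero, sub_eq_zero] at h5
    -- endpoints at s = 0 and s = 1
    have h1Icc : (1:ℝ) ∈ Icc (0:ℝ) 1 := ⟨zero_le_one, le_refl 1⟩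
    have h0Icc : (0:ℝ) ∈ Icc (0:ℝ) 1 := ⟨le_refl 0, zero_le_one⟩
    have hq0a : q 0 1 = a := by
      have hcl := lift_close' (F := F) (T := 1) (q₂ := fun _ => a) (p₂ := P 0) (δ := 0)
        zero_le_one hr hC0 hlow
        (by positivity : (0:ℝ) ≤ 2*C*Λ) (le_refl (0:ℝ))
        (hq 0 h0Icc).2.2
        (fun v _ w _ => by rw [sub_self, norm_zero, zero_mul])
        (hq 0 h0Icc).2.1
        (fun v _ => by simp only [hP, zero_smul, add_zero, hz])
        ((hq 0 h0Icc).1) (hqball 0 h0Icc)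
        (fun v _ => by rw [sub_self, norm_zero])
        (by linarith)
      have h3 := hcl 1 h1Icc
      rw [mul_zero] at h3
      have h5 : ‖q 0 1 - a‖ = 0 := le_antisymm h3 (norm_nonneg _)
      rwa [norm_eq_zero, sub_eq_zero] at h5
    have hq1b : q 1 1 = b := by
      have hcl := lift_close' (F := F) (T := 1) (q₂ := γ) (p₂ := P 1) (δ := 0)
        zero_le_one hr hC0 hlow
        (by positivity : (0:ℝ) ≤ 2*C*Λ) (norm_nonneg (b - a))
        (hq 1 h1Icc).2.2
        (fun v _ w _ => hγlip v w)
        (hq 1 h1Icc).2.1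
        (fun v _ => by simp only [hP, one_smul, add_sub_cancel, hβ])
        ((hq 1 h1Icc).1.trans hγ0.symm) (hqball 1 h1Icc)
        (fun v _ => by rw [sub_self, norm_zero])
        (by linarith)
      have h3 := hcl 1 h1Icc
      rw [mul_zero] at h3
      have h5 : ‖q 1 1 - γ 1‖ = 0 := le_antisymm h3 (norm_nonneg _)
      rw [norm_eq_zero, sub_eq_zero] at h5
      rw [h5, hγ1]
    -- connectedness argument on s
    set A : Set ℝ := {s | s ∈ Icc (0:ℝ) 1 ∧ q s 1 = a} with hAdef
    have h0A : (0:ℝ) ∈ A := ⟨h0Icc, hq0a⟩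
    have hAne : A.Nonempty := ⟨0, h0A⟩
    have hAbdd : BddAbove A := ⟨1, fun x hx => hx.1.2⟩
    set m := sSup A with hmdef
    have hm0 : 0 ≤ m := le_csSup hAbdd h0A
    have hm1 : m ≤ 1 := csSup_le hAne (fun x hx => hx.1.2)
    have hmA : m ∈ A := by
      refine ⟨⟨hm0, hm1⟩, ?_⟩
      obtain ⟨u, huA, hu⟩ := exists_lt_of_lt_csSup hAne (by linarith : m - θ < m)
      have hum : u ≤ m := le_csSup hAbdd huA
      have h1 : |m - u| ≤ θ := by
        rw [abs_of_nonneg (by linarith)]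
        linarith
      rw [hstep m ⟨hm0, hm1⟩ u huA.1 h1]
      exact huA.2
    have hmeq : m = 1 := by
      by_contra hne'
      have hmlt : m < 1 := lt_of_le_of_ne hm1 hne'
      set s' := min 1 (m + θ) with hs'def
      have hs'Icc : s' ∈ Icc (0:ℝ) 1 := ⟨le_min zero_le_one (by linarith), min_le_left _ _⟩
      have hs'm : m ≤ s' := le_min hmlt.le (by linarith)
      have h1 : |s' - m| ≤ θ := by
        rw [abs_of_nonneg (by linarith)]
        have := min_le_right 1 (m + θ)
        linarith
      have hs'A : s' ∈ A := by
        refine ⟨hs'Icc, ?_⟩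
        rw [hstep s' hs'Icc m ⟨hm0, hm1⟩ h1]
        exact hmA.2
      have h2 : s' ≤ m := le_csSup hAbdd hs'A
      have h3 : m < s' := lt_min hmlt (by linarith)
      linarith
    have h2 := hmA.2
    rw [hmeq] at h2
    rw [hq1b] at h2
    exact h2.symm
  · -- surjectivity
    intro z
    set Λ := ‖z - F 0‖ with hΛdef
    have hΛ : 0 ≤ Λ := norm_nonneg _
    set p : ℝ → EuclideanSpace ℝ (Fin d) := fun u => F 0 + u • (z - F 0) with hp
    have hplip : ∀ v w : ℝ, ‖p v - p w‖ ≤ Λ * |v - w| := by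
      intro v w
      have h1 : p v - p w = (v - w) • (z - F 0) := by
        rw [hp]; simp only [add_sub_add_left_eq_sub, ← sub_smul]
      rw [h1, norm_smul, Real.norm_eq_abs, mul_comm]
    have hp0 : p 0 = F (0 : EuclideanSpace ℝ (Fin d)) := by rw [hp]; simp
    obtain ⟨r, hr, hlow, hsurjK⟩ := key_lemma' hF hC hrinv hCn hCinv
      (closedBall (0:EuclideanSpace ℝ (Fin d)) (2*C*Λ)) (isCompact_closedBall _ _)
    obtain ⟨q, hq0, hqF, _⟩ := lift_exists' hF.continuous hC hr hΛ hlow hsurjK hplip hp0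
    refine ⟨q 1, ?_⟩
    have h1 := hqF 1 ⟨zero_le_one, le_refl 1⟩
    rw [hp] at h1
    simp only [one_smul, add_sub_cancel] at h1
    exact h1
end

section
/- Let d ≥ 1, ε > 0, σ ∈ (0,1), M ≥ 0, C₁ ≥ 1 and t ≥ 0. Let v₀ : ℝ^d → ℝ^d be continuously differentiable with ‖Dv₀(y)‖ ≤ M for all y, and suppose that: (i) the map X_t(y) := y + t·v₀(y) is a bijection of ℝ^d whose inverse is (C₁/(1+εt))-Lipschitz; (ii) for every y, Id + t·Dv₀(y) is invertible with ‖(Id + t·Dv₀(y))⁻¹‖ ≤ C₁/(1+εt); (iii) |det(Id + t·Dv₀(y))| ≤ C₁·(1+εt)^d for every y. Define K̃_t : ℝ^d → (d×d real matrices) by K̃_t(x) := (Id + t·Dv₀(X_t⁻¹(x)))⁻¹·(Dv₀(X_t⁻¹(x)) − Id). Then there exists a constant C > 0 depending only on d, σ, ε, M and C₁ (not on t) such that [K̃_t]_σ ≤ C·(1+εt)^{d/2 − 1 − σ}·[Dv₀]_σ. -/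
open MeasureTheory ENNReal

set_option maxHeartbeats 1000000
set_option synthInstance.maxHeartbeats 1000000

/-- Squared Gagliardo-type seminorm of order `σ` of a function on `ℝ^d`,
valued in `[0,∞]`. -/
noncomputable def gagliardoSq (d : ℕ) {E : Type*} [NormedAddCommGroup E] (σ : ℝ)
    (f : EuclideanSpace ℝ (Fin d) → E) : ℝ≥0∞ :=
  ∫⁻ x, ∫⁻ y,
    (‖f y - f x‖₊ : ℝ≥0∞) ^ 2 / (‖y - x‖₊ : ℝ≥0∞) ^ ((d : ℝ) + 2 * σ)

noncomputable abbrev EucSp (d : ℕ) := EuclideanSpace ℝ (Fin d)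

lemma alg_key {R : Type*} [Ring R] [Module ℝ R]
    (t : ℝ) (D D' B B' : R)
    (hsm : ∀ a b : R, (t • a) * b = t • (a * b))
    (hms : ∀ a b : R, a * (t • b) = t • (a * b))
    (h1 : B' * (1 + t • D') = 1) (h2 : (1 + t • D) * B = 1) :
    B' * (D' - 1) - B * (D - 1) = B' * (D' - D) + t • (B' * (D - D') * B * (D - 1)) := by
  have hAA : (1 + t • D) - (1 + t • D') = t • (D - D') := by rw [smul_sub]; abel
  have hBB : B' - B = t • (B' * (D - D') * B) := by
    calc B' - B = B' * ((1 + t • D) * B) - (B' * (1 + t • D')) * B := by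
          rw [h1, h2, mul_one, one_mul]
      _ = B' * ((((1 + t • D)) - ((1 + t • D'))) * B) := by noncomm_ring
      _ = B' * ((t • (D - D')) * B) := by rw [hAA]
      _ = t • (B' * (D - D') * B) := by rw [hsm, hms, mul_assoc]
  have hdec : B' * (D' - 1) - B * (D - 1) = B' * (D' - D) + (B' - B) * (D - 1) := by
    noncomm_ring
  rw [hdec, hBB, hsm]

lemma ptwise {d : ℕ} (t ε M C₁ : ℝ) (ht : 0 ≤ t) (hε : 0 < ε) (hM : 0 ≤ M) (hC₁ : 1 ≤ C₁)
    (D D' : EucSp d →L[ℝ] EucSp d)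
    (hA : IsUnit (ContinuousLinearMap.id ℝ (EucSp d) + t • D))
    (hA' : IsUnit (ContinuousLinearMap.id ℝ (EucSp d) + t • D'))
    (hB : ‖Ring.inverse (ContinuousLinearMap.id ℝ (EucSp d) + t • D)‖ ≤ C₁ / (1 + ε*t))
    (hB' : ‖Ring.inverse (ContinuousLinearMap.id ℝ (EucSp d) + t • D')‖ ≤ C₁ / (1 + ε*t))
    (hD : ‖D‖ ≤ M) :
    ‖Ring.inverse (ContinuousLinearMap.id ℝ (EucSp d) + t • D') *
        (D' - ContinuousLinearMap.id ℝ (EucSp d))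
      - Ring.inverse (ContinuousLinearMap.id ℝ (EucSp d) + t • D) *
        (D - ContinuousLinearMap.id ℝ (EucSp d))‖
      ≤ (C₁ + C₁^2 * (M+1) / ε) / (1 + ε*t) * ‖D' - D‖ := by
  have hu1 : 1 ≤ 1 + ε*t := by nlinarith
  have hu0 : (0:ℝ) < 1 + ε*t := by linarith
  rw [show ContinuousLinearMap.id ℝ (EucSp d) = (1 : EucSp d →L[ℝ] EucSp d) from rfl] at *
  set B := Ring.inverse ((1 : EucSp d →L[ℝ] EucSp d) + t • D) with hBdef
  set B' := Ring.inverse ((1 : EucSp d →L[ℝ] EucSp d) + t • D') with hB'def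
  have h1 : B' * (1 + t • D') = 1 := Ring.inverse_mul_cancel _ hA'
  have h2 : (1 + t • D) * B = 1 := Ring.mul_inverse_cancel _ hA
  rw [alg_key t D D' B B' (fun a b => ContinuousLinearMap.smul_comp t a b)
    (fun a b => ContinuousLinearMap.comp_smul a t b) h1 h2]
  have hDI : ‖D - 1‖ ≤ M + 1 := by
    calc ‖D - 1‖ ≤ ‖D‖ + ‖(1 : EucSp d →L[ℝ] EucSp d)‖ := norm_sub_le _ _
      _ ≤ M + 1 := add_le_add hD ContinuousLinearMap.norm_id_le
  have hn1 : ‖B' * (D' - D)‖ ≤ C₁/(1+ε*t) * ‖D' - D‖ :=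
    le_trans (norm_mul_le _ _) (mul_le_mul_of_nonneg_right hB' (norm_nonneg _))
  have hn2 : ‖t • (B' * (D - D') * B * (D - 1))‖
      ≤ t * (C₁/(1+ε*t) * ‖D' - D‖ * (C₁/(1+ε*t)) * (M+1)) := by
    rw [norm_smul t (B' * (D - D') * B * (D - 1)), Real.norm_eq_abs, abs_of_nonneg ht]
    apply mul_le_mul_of_nonneg_left _ ht
    have e1 : ‖B' * (D - D') * B * (D - 1)‖ ≤ ‖B'‖ * ‖D - D'‖ * ‖B‖ * ‖D - 1‖ := by
      calc ‖B' * (D - D') * B * (D - 1)‖ ≤ ‖B' * (D - D') * B‖ * ‖D - 1‖ := norm_mul_le _ _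
        _ ≤ ‖B' * (D - D')‖ * ‖B‖ * ‖D - 1‖ := by gcongr; exact norm_mul_le _ _
        _ ≤ ‖B'‖ * ‖D - D'‖ * ‖B‖ * ‖D - 1‖ := by gcongr ?_ * _ * _; exact norm_mul_le _ _
    refine e1.trans ?_
    rw [norm_sub_rev D D']
    have hcu : (0:ℝ) ≤ C₁ / (1+ε*t) := by positivity
    gcongr <;> first | assumption | exact norm_nonneg _
  calc ‖B' * (D' - D) + t • (B' * (D - D') * B * (D - 1))‖
      ≤ ‖B' * (D' - D)‖ + ‖t • (B' * (D - D') * B * (D - 1))‖ := norm_add_le _ _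
    _ ≤ C₁/(1+ε*t) * ‖D' - D‖ + t * (C₁/(1+ε*t) * ‖D' - D‖ * (C₁/(1+ε*t)) * (M+1)) :=
        add_le_add hn1 hn2
    _ ≤ (C₁ + C₁^2 * (M+1) / ε) / (1+ε*t) * ‖D' - D‖ := by
        have hΔ : 0 ≤ ‖D' - D‖ := norm_nonneg _
        have hc1 : (0:ℝ) < C₁ := by linarith
        have key : t * (C₁/(1+ε*t) * (C₁/(1+ε*t)) * (M+1)) ≤ C₁^2 * (M+1) / ε / (1+ε*t) := by
          have e1 : t * (C₁/(1+ε*t) * (C₁/(1+ε*t)) * (M+1))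
              = (C₁^2*(M+1)) * (t/((1+ε*t)*(1+ε*t))) := by field_simp
          have e2 : C₁^2 * (M+1) / ε / (1+ε*t) = (C₁^2*(M+1)) * (1/(ε*(1+ε*t))) := by
            field_simp
          rw [e1, e2]
          apply mul_le_mul_of_nonneg_left _ (by positivity)
          rw [div_le_div_iff₀ (by positivity) (by positivity)]
          nlinarith
        calc C₁/(1+ε*t) * ‖D' - D‖ + t * (C₁/(1+ε*t) * ‖D' - D‖ * (C₁/(1+ε*t)) * (M+1))
            = (C₁/(1+ε*t) + t * (C₁/(1+ε*t) * (C₁/(1+ε*t)) * (M+1))) * ‖D' - D‖ := by ring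
          _ ≤ (C₁/(1+ε*t) + C₁^2 * (M+1) / ε / (1+ε*t)) * ‖D' - D‖ := by gcongr
          _ = (C₁ + C₁^2 * (M+1) / ε) / (1+ε*t) * ‖D' - D‖ := by ring

lemma ennreal_ptwise (J k s p dy dy' nK nD ndf nd : ℝ)
    (hJ : 0 ≤ J) (hk : 0 ≤ k) (hs : 0 < s) (hp : 0 ≤ p)
    (hdy0 : 0 ≤ dy) (hdy'0 : 0 ≤ dy') (hnK0 : 0 ≤ nK) (hnD0 : 0 ≤ nD) (hnd0 : 0 ≤ nd)
    (hdy : dy ≤ J) (hdy' : dy' ≤ J) (hK : nK ≤ k * nD) (hlow : s * nd ≤ ndf) :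
    ENNReal.ofReal dy * ENNReal.ofReal dy' * (ENNReal.ofReal nK ^ 2 / ENNReal.ofReal ndf ^ p)
      ≤ ENNReal.ofReal (J ^ 2 * k ^ 2 * (s ^ p)⁻¹) *
        (ENNReal.ofReal nD ^ 2 / ENNReal.ofReal nd ^ p) := by
  have hb0 : ENNReal.ofReal (s ^ p) ≠ 0 := by
    simp [ENNReal.ofReal_eq_zero, not_le, Real.rpow_pos_of_pos hs]
  have hbt : ENNReal.ofReal (s ^ p) ≠ ⊤ := ofReal_ne_top
  have hnum : ENNReal.ofReal dy * ENNReal.ofReal dy' * ENNReal.ofReal nK ^ 2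
      ≤ ENNReal.ofReal (J ^ 2 * k ^ 2) * ENNReal.ofReal nD ^ 2 := by
    rw [← ENNReal.ofReal_pow hnK0, ← ENNReal.ofReal_pow hnD0,
        ← ENNReal.ofReal_mul hdy0, ← ENNReal.ofReal_mul (by positivity),
        ← ENNReal.ofReal_mul (by positivity)]
    apply ENNReal.ofReal_le_ofReal
    calc dy * dy' * nK ^ 2 ≤ J * J * (k * nD) ^ 2 := by gcongr
      _ = J ^ 2 * k ^ 2 * nD ^ 2 := by ring
  have hden : ENNReal.ofReal (s ^ p) * ENNReal.ofReal nd ^ p ≤ ENNReal.ofReal ndf ^ p := by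
    rw [← ENNReal.ofReal_rpow_of_pos hs, ← ENNReal.mul_rpow_of_nonneg _ _ hp,
        ← ENNReal.ofReal_mul hs.le]
    exact ENNReal.rpow_le_rpow (ENNReal.ofReal_le_ofReal hlow) hp
  calc ENNReal.ofReal dy * ENNReal.ofReal dy' * (ENNReal.ofReal nK ^ 2 / ENNReal.ofReal ndf ^ p)
      = (ENNReal.ofReal dy * ENNReal.ofReal dy' * ENNReal.ofReal nK ^ 2) /
          ENNReal.ofReal ndf ^ p := by rw [mul_div_assoc]
    _ ≤ (ENNReal.ofReal (J ^ 2 * k ^ 2) * ENNReal.ofReal nD ^ 2) /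
          (ENNReal.ofReal (s ^ p) * ENNReal.ofReal nd ^ p) := ENNReal.div_le_div hnum hden
    _ = ENNReal.ofReal (J ^ 2 * k ^ 2) * (ENNReal.ofReal (s ^ p))⁻¹ *
          (ENNReal.ofReal nD ^ 2 / ENNReal.ofReal nd ^ p) := by
        rw [div_eq_mul_inv, div_eq_mul_inv, ENNReal.mul_inv (Or.inl hb0) (Or.inl hbt)]
        ring
    _ = ENNReal.ofReal (J ^ 2 * k ^ 2 * (s ^ p)⁻¹) *
          (ENNReal.ofReal nD ^ 2 / ENNReal.ofReal nd ^ p) := by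
        congr 1
        rw [ENNReal.ofReal_mul (by positivity : (0:ℝ) ≤ J ^ 2 * k ^ 2),
          ENNReal.ofReal_inv_of_pos (by positivity)]

lemma rexp_aux (u C₁ c a s : ℝ) (hu : 0 < u) (hC : 0 < C₁) :
    (C₁ * u ^ a) ^ 2 * (c / u) ^ 2 * ((u / C₁) ^ (a + 2*s))⁻¹
      = (C₁ ^ ((a + 2*s)/2 + 1) * c * u ^ (a/2 - 1 - s)) ^ 2 := by
  rw [Real.div_rpow hu.le hC.le]
  rw [show (a + 2*s)/2 + 1 = ((a+2*s) + 2) / 2 by ring]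
  rw [mul_pow, mul_pow, div_pow, mul_pow]
  rw [← Real.rpow_natCast (u ^ a) 2, ← Real.rpow_mul hu.le,
      ← Real.rpow_natCast (u ^ (a/2 - 1 - s)) 2, ← Real.rpow_mul hu.le,
      ← Real.rpow_natCast (C₁ ^ (((a+2*s)+2)/2)) 2, ← Real.rpow_mul hC.le,
      ← Real.rpow_natCast u 2, ← Real.rpow_natCast C₁ 2]
  push_cast
  rw [inv_div]
  rw [show C₁ ^ (2:ℝ) * u ^ (a * 2) * (c ^ 2 / u ^ (2:ℝ)) * (C₁ ^ (a + 2*s) / u ^ (a + 2*s))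
      = (C₁ ^ (2:ℝ) * C₁ ^ (a + 2*s)) * c ^ 2 *
        (u ^ (a * 2) * (u ^ (2:ℝ))⁻¹ * (u ^ (a + 2*s))⁻¹) by ring]
  rw [← Real.rpow_add hC, ← Real.rpow_neg hu.le, ← Real.rpow_neg hu.le,
      ← Real.rpow_add hu, ← Real.rpow_add hu]
  congr 1
  · congr 1
    ring
  · congr 1
    ring

theorem Ktilde_gagliardo_decay (d : ℕ) (hd : 1 ≤ d) (ε σ M C₁ : ℝ)
    (hε : 0 < ε) (hσ0 : 0 < σ) (hσ1 : σ < 1) (hM : 0 ≤ M) (hC₁ : 1 ≤ C₁) :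
    ∃ C > 0, ∀ t : ℝ, 0 ≤ t →
      ∀ v₀ : EuclideanSpace ℝ (Fin d) → EuclideanSpace ℝ (Fin d),
        ContDiff ℝ 1 v₀ →
        (∀ y, ‖fderiv ℝ v₀ y‖ ≤ M) →
        Function.Bijective (fun y => y + t • v₀ y) →
        (∀ a b, ‖Function.invFun (fun y => y + t • v₀ y) b -
            Function.invFun (fun y => y + t • v₀ y) a‖ ≤ C₁ / (1 + ε * t) * ‖b - a‖) →
        (∀ y, IsUnit
          (ContinuousLinearMap.id ℝ (EuclideanSpace ℝ (Fin d)) + t • fderiv ℝ v₀ y)) →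
        (∀ y, ‖Ring.inverse
            (ContinuousLinearMap.id ℝ (EuclideanSpace ℝ (Fin d)) + t • fderiv ℝ v₀ y)‖ ≤
          C₁ / (1 + ε * t)) →
        (∀ y, |(ContinuousLinearMap.id ℝ (EuclideanSpace ℝ (Fin d)) + t • fderiv ℝ v₀ y).det| ≤
          C₁ * (1 + ε * t) ^ (d : ℝ)) →
        (gagliardoSq d σ (fun x =>
            Ring.inverse (ContinuousLinearMap.id ℝ (EuclideanSpace ℝ (Fin d)) +
                t • fderiv ℝ v₀ (Function.invFun (fun y => y + t • v₀ y) x)) *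
              (fderiv ℝ v₀ (Function.invFun (fun y => y + t • v₀ y) x) -
                ContinuousLinearMap.id ℝ (EuclideanSpace ℝ (Fin d))))) ^ (1 / 2 : ℝ) ≤
          ENNReal.ofReal (C * (1 + ε * t) ^ ((d : ℝ) / 2 - 1 - σ)) *
            (gagliardoSq d σ (fun y => fderiv ℝ v₀ y)) ^ (1 / 2 : ℝ) := by
  set c : ℝ := C₁ + C₁^2 * (M+1) / ε with hc_def
  have hc0 : 0 < c := by positivity
  have hC₁0 : (0:ℝ) < C₁ := by linarith
  refine ⟨C₁ ^ (((d:ℝ) + 2*σ)/2 + 1) * c, by positivity, ?_⟩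
  intro t ht v₀ hv hDvM hbij hinvLip hunit hinvnorm hdet
  have hu0 : (0:ℝ) < 1 + ε*t := by nlinarith
  have hu1 : (1:ℝ) ≤ 1 + ε*t := by nlinarith
  set p : ℝ := (d:ℝ) + 2*σ with hp_def
  have hp0 : 0 ≤ p := by positivity
  set f : EucSp d → EucSp d := fun y => y + t • v₀ y with hf
  have hgf : ∀ y, Function.invFun f (y + t • v₀ y) = y :=
    fun y => Function.leftInverse_invFun hbij.1 y
  set A : EucSp d → (EucSp d →L[ℝ] EucSp d) :=
    fun y => ContinuousLinearMap.id ℝ (EucSp d) + t • fderiv ℝ v₀ y with hA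
  have hdiff : ∀ y, HasFDerivAt f (A y) y := fun y =>
    (hasFDerivAt_id y).add (((hv.differentiable one_ne_zero y).hasFDerivAt).const_smul t)
  have cov : ∀ G : EucSp d → ℝ≥0∞,
      ∫⁻ x, G x = ∫⁻ y, ENNReal.ofReal |(A y).det| * G (f y) := by
    intro G
    have h := lintegral_image_eq_lintegral_abs_det_fderiv_mul (volume : Measure (EucSp d))
      MeasurableSet.univ (fun x _ => (hdiff x).hasFDerivWithinAt) hbij.1.injOn G
    simpa [Set.image_univ, hbij.2.range_eq] using h
  set K : EucSp d → (EucSp d →L[ℝ] EucSp d) := fun x =>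
    Ring.inverse (ContinuousLinearMap.id ℝ (EucSp d) +
        t • fderiv ℝ v₀ (Function.invFun f x)) *
      (fderiv ℝ v₀ (Function.invFun f x) - ContinuousLinearMap.id ℝ (EucSp d)) with hK
  have key2 : ∀ y y', ‖K (f y') - K (f y)‖
      ≤ c/(1+ε*t) * ‖fderiv ℝ v₀ y' - fderiv ℝ v₀ y‖ := by
    intro y y'
    have e : K (f y') - K (f y)
        = Ring.inverse (ContinuousLinearMap.id ℝ (EucSp d) + t • fderiv ℝ v₀ y') *
            (fderiv ℝ v₀ y' - ContinuousLinearMap.id ℝ (EucSp d))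
          - Ring.inverse (ContinuousLinearMap.id ℝ (EucSp d) + t • fderiv ℝ v₀ y) *
            (fderiv ℝ v₀ y - ContinuousLinearMap.id ℝ (EucSp d)) := by
      simp only [hK, Function.leftInverse_invFun hbij.1 y, Function.leftInverse_invFun hbij.1 y']
    rw [e, hc_def]
    exact ptwise t ε M C₁ ht hε hM hC₁ _ _ (hunit y) (hunit y')
      (hinvnorm y) (hinvnorm y') (hDvM y)
  have hlow : ∀ y y', (1+ε*t)/C₁ * ‖y' - y‖ ≤ ‖f y' - f y‖ := by
    intro y y'
    have h := hinvLip (y + t • v₀ y) (y' + t • v₀ y')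
    rw [hgf y, hgf y'] at h
    calc (1+ε*t)/C₁ * ‖y' - y‖
        ≤ (1+ε*t)/C₁ * (C₁ / (1 + ε * t) * ‖(y' + t • v₀ y') - (y + t • v₀ y)‖) := by
          apply mul_le_mul_of_nonneg_left h (by positivity)
      _ = ‖f y' - f y‖ := by
          rw [hf]
          field_simp
  -- the main integral inequality
  set Θr : ℝ := (C₁ * (1 + ε * t) ^ (d:ℝ)) ^ 2 * (c/(1+ε*t)) ^ 2 *
    (((1+ε*t)/C₁) ^ p)⁻¹ with hΘ
  have main : gagliardoSq d σ K
      ≤ ENNReal.ofReal Θr * gagliardoSq d σ (fun y => fderiv ℝ v₀ y) := by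
    have covK : gagliardoSq d σ K
        = ∫⁻ y, ENNReal.ofReal |(A y).det| *
            ∫⁻ y', ENNReal.ofReal |(A y').det| *
              ((‖K (f y') - K (f y)‖₊ : ℝ≥0∞) ^ 2 / (‖f y' - f y‖₊ : ℝ≥0∞) ^ p) := by
      rw [gagliardoSq]
      rw [cov (fun x => ∫⁻ y', (‖K y' - K x‖₊ : ℝ≥0∞) ^ 2 / (‖y' - x‖₊ : ℝ≥0∞) ^ p)]
      refine lintegral_congr fun y => ?_
      congr 1
      exact cov (fun x' => (‖K x' - K (f y)‖₊ : ℝ≥0∞) ^ 2 / (‖x' - f y‖₊ : ℝ≥0∞) ^ p)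
    rw [covK]
    have step : ∀ y, ENNReal.ofReal |(A y).det| *
        ∫⁻ y', ENNReal.ofReal |(A y').det| *
          ((‖K (f y') - K (f y)‖₊ : ℝ≥0∞) ^ 2 / (‖f y' - f y‖₊ : ℝ≥0∞) ^ p)
        ≤ ∫⁻ y', ENNReal.ofReal Θr *
            ((‖fderiv ℝ v₀ y' - fderiv ℝ v₀ y‖₊ : ℝ≥0∞) ^ 2 / (‖y' - y‖₊ : ℝ≥0∞) ^ p) := by
      intro y
      rw [← lintegral_const_mul' _ _ ofReal_ne_top]
      refine lintegral_mono fun y' => ?_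
      rw [← mul_assoc]
      simp only [← enorm_eq_nnnorm, ← ofReal_norm]
      rw [hΘ]
      exact ennreal_ptwise (C₁ * (1 + ε * t) ^ (d:ℝ)) (c/(1+ε*t)) ((1+ε*t)/C₁) p
        |(A y).det| |(A y').det| (‖K (f y') - K (f y)‖) (‖fderiv ℝ v₀ y' - fderiv ℝ v₀ y‖)
        (‖f y' - f y‖) (‖y' - y‖)
        (by positivity) (by positivity) (by positivity) hp0
        (abs_nonneg _) (abs_nonneg _) (norm_nonneg _) (norm_nonneg _) (norm_nonneg _)
        (hdet y) (hdet y') (key2 y y') (hlow y y')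
    calc (∫⁻ y, ENNReal.ofReal |(A y).det| * ∫⁻ y', ENNReal.ofReal |(A y').det| *
            ((‖K (f y') - K (f y)‖₊ : ℝ≥0∞) ^ 2 / (‖f y' - f y‖₊ : ℝ≥0∞) ^ p))
        ≤ ∫⁻ y, ∫⁻ y', ENNReal.ofReal Θr *
            ((‖fderiv ℝ v₀ y' - fderiv ℝ v₀ y‖₊ : ℝ≥0∞) ^ 2 / (‖y' - y‖₊ : ℝ≥0∞) ^ p) :=
          lintegral_mono step
      _ = ENNReal.ofReal Θr * gagliardoSq d σ (fun y => fderiv ℝ v₀ y) := by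
          rw [gagliardoSq]
          rw [← lintegral_const_mul' _ _ ofReal_ne_top]
          refine lintegral_congr fun y => ?_
          rw [← lintegral_const_mul' _ _ ofReal_ne_top]
  -- conclude via rpow 1/2
  have hΘr_eq : Θr = (C₁ ^ (((d:ℝ) + 2*σ)/2 + 1) * c * (1 + ε*t) ^ ((d:ℝ)/2 - 1 - σ)) ^ 2 := by
    rw [hΘ, hp_def]
    exact rexp_aux (1+ε*t) C₁ c (d:ℝ) σ hu0 hC₁0
  have hr0 : (0:ℝ) < C₁ ^ (((d:ℝ) + 2*σ)/2 + 1) * c * (1 + ε*t) ^ ((d:ℝ)/2 - 1 - σ) := by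
    positivity
  calc (gagliardoSq d σ K) ^ (1/2 : ℝ)
      ≤ (ENNReal.ofReal Θr * gagliardoSq d σ (fun y => fderiv ℝ v₀ y)) ^ (1/2 : ℝ) :=
        ENNReal.rpow_le_rpow main (by norm_num)
    _ = (ENNReal.ofReal Θr) ^ (1/2 : ℝ) *
        (gagliardoSq d σ (fun y => fderiv ℝ v₀ y)) ^ (1/2 : ℝ) :=
        ENNReal.mul_rpow_of_nonneg _ _ (by norm_num)
    _ = ENNReal.ofReal (C₁ ^ (((d:ℝ) + 2*σ)/2 + 1) * c * (1 + ε*t) ^ ((d:ℝ)/2 - 1 - σ)) *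
        (gagliardoSq d σ (fun y => fderiv ℝ v₀ y)) ^ (1/2 : ℝ) := by
        congr 1
        rw [ENNReal.ofReal_rpow_of_pos (by rw [hΘr_eq]; positivity)]
        congr 1
        rw [hΘr_eq, ← Real.rpow_natCast
          (C₁ ^ (((d:ℝ) + 2*σ)/2 + 1) * c * (1 + ε*t) ^ ((d:ℝ)/2 - 1 - σ)) 2,
          ← Real.rpow_mul hr0.le]
        norm_num
    _ ≤ ENNReal.ofReal (C₁ ^ (((d:ℝ) + 2*σ)/2 + 1) * c * (1 + ε * t) ^ ((d : ℝ) / 2 - 1 - σ)) *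
        (gagliardoSq d σ (fun y => fderiv ℝ v₀ y)) ^ (1/2 : ℝ) := le_refl _
end
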